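/- arXiv:2103.12438 — 3 statements merged into one kernel-verified Lean document; each statement's English description precedes it below -/
import Mathlib

section
/- Let (G,θ) be an oriented pro-ℓ group, (A,θ°) a θ°-abelian oriented pro-ℓ group, and ψ: G → A a continuous homomorphism with θ = θ° ∘ ψ. Then ψ(K_θ(G)) = {1}, and moreover ψ(I_θ(G)) = {1}, where I_θ(G) is the closed isolator of K_θ(G) in ker θ; hence ψ factors uniquely through the quotient G(θ) = G/I_θ(G). -/
open scoped Topology

/-- A pro-`p` group: a compact, totally disconnected topological group all of whose
open normal subgroups have `p`-power index. -/
def IsProPGroup (p : ℕ) (G : Type*) [Group G] [TopologicalSpace G] : Prop :=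
  CompactSpace G ∧ TotallyDisconnectedSpace G ∧
    ∀ U : Subgroup G, U.Normal → IsOpen (U : Set G) → ∃ k : ℕ, U.index = p ^ k

/-- `p`-adic exponentiation `h ^ λ` for `λ ∈ ℤ_[p]`, defined as the limit of `h ^ n`
as the integer `n` tends `p`-adically to `λ`. -/
noncomputable def padicPow (p : ℕ) [Fact p.Prime] {G : Type*} [Group G] [TopologicalSpace G]
    (h : G) (lam : ℤ_[p]) : G :=
  haveI : Nonempty G := ⟨1⟩
  Filter.limUnder (Filter.comap (fun n : ℤ => (n : ℤ_[p])) (𝓝 lam)) (fun n : ℤ => h ^ n)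

section Oriented

variable (p : ℕ) [Fact p.Prime] {G : Type*} [Group G] [TopologicalSpace G] [IsTopologicalGroup G]

/-- The subgroup `K_θ(G)`: the closed subgroup generated by the elements
`h ^ (-θ(g)) * (g * h * g⁻¹)` with `g ∈ G` and `h ∈ ker θ`. -/
noncomputable def Ktheta (θ : G →* ℤ_[p]ˣ) : Subgroup G :=
  (Subgroup.closure {x : G | ∃ g h : G, h ∈ θ.ker ∧
      x = padicPow p h (-((θ g : ℤ_[p]ˣ) : ℤ_[p])) * (g * h * g⁻¹)}).topologicalClosure

/-- `I_θ(G)`: the closure of the isolator of `K_θ(G)` in `ker θ`. -/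
noncomputable def Itheta (θ : G →* ℤ_[p]ˣ) : Subgroup G :=
  (Subgroup.closure {g : G | g ∈ θ.ker ∧ ∃ k : ℕ, g ^ (p ^ k) ∈ Ktheta p θ}).topologicalClosure

/-- The oriented pro-`p` group `(G,θ)` is torsion-free: `p ≠ 2`, or `im θ ⊆ 1 + 4ℤ₂`. -/
def OriTorsionFree (θ : G →* ℤ_[p]ˣ) : Prop :=
  p ≠ 2 ∨ ∀ g : G, ∃ y : ℤ_[p], ((θ g : ℤ_[p]ˣ) : ℤ_[p]) = 1 + 4 * y

/-- `(G,θ)` is `θ`-abelian: `ker θ` is a torsion-free abelian group which coincides with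
the `θ`-center, i.e. `g h g⁻¹ = h ^ θ(g)` for all `g ∈ G`, `h ∈ ker θ`. -/
noncomputable def IsThetaAbelian (θ : G →* ℤ_[p]ˣ) : Prop :=
  (∀ h₁ ∈ θ.ker, ∀ h₂ ∈ θ.ker, h₁ * h₂ = h₂ * h₁) ∧
  (∀ h ∈ θ.ker, ∀ n : ℕ, n ≠ 0 → h ^ n = 1 → h = 1) ∧
  (∀ g : G, ∀ h ∈ θ.ker, g * h * g⁻¹ = padicPow p h ((θ g : ℤ_[p]ˣ) : ℤ_[p]))

/-- `(G,θ)` is split `θ`-abelian: it is `θ`-abelian (so `ker θ` is a free abelian pro-`p`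
group) and the projection `G → G/ker θ` splits, i.e. `ker θ` has a closed complement. -/
noncomputable def IsSplitThetaAbelian (θ : G →* ℤ_[p]ˣ) : Prop :=
  IsThetaAbelian p θ ∧
    ∃ C : Subgroup G, IsClosed (C : Set G) ∧ C ⊓ θ.ker = ⊥ ∧ C ⊔ θ.ker = ⊤

/-- `(G,θ)` is Kummerian: `ker θ / K_θ(G)` is a torsion-free (equivalently, free)
abelian pro-`p` group, i.e. `K_θ(G)` is isolated in `ker θ`. -/
noncomputable def IsKummerian (θ : G →* ℤ_[p]ˣ) : Prop :=
  ∀ h ∈ θ.ker, ∀ k : ℕ, h ^ (p ^ k) ∈ Ktheta p θ → h ∈ Ktheta p θ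

end Oriented

section Frattini

variable (p : ℕ) (G : Type*) [Group G] [TopologicalSpace G] [IsTopologicalGroup G]

/-- The Frattini subgroup `Φ(G) = cl(G^p [G,G])` of a pro-`p` group. -/
def proFrattini : Subgroup G :=
  ((Subgroup.closure {x : G | ∃ g : G, x = g ^ p}) ⊔ commutator G).topologicalClosure

/-- `G` is powerful: `[G,G] ⊆ cl(G^p)` (`cl(G^4)` if `p = 2`). -/
def IsPowerfulPro : Prop :=
  (commutator G : Set G) ⊆
    ((Subgroup.closure {x : G | ∃ g : G, x = g ^ (if p = 2 then 4 else p)}).topologicalClosure :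
      Set G)

/-- Topologically finitely generated. -/
def IsTopFG : Prop :=
  ∃ S : Finset G, (Subgroup.closure (S : Set G)).topologicalClosure = ⊤

/-- Torsion-free group. -/
def IsTorsionFreeGrp : Prop := ∀ g : G, ∀ n : ℕ, n ≠ 0 → g ^ n = 1 → g = 1

/-- A uniform (uniformly powerful) pro-`p` group: finitely generated, powerful and
torsion-free. -/
def IsUniformProP : Prop :=
  IsProPGroup p G ∧ IsTopFG G ∧ IsPowerfulPro p G ∧ IsTorsionFreeGrp G

/-- Locally uniform: every closed subgroup is uniform. -/
def IsLocallyUniform : Prop :=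
  ∀ H : Subgroup G, IsClosed (H : Set G) → IsUniformProP p H

/-- A free pro-`p` group: a pro-`p` group which is projective with respect to surjections
of finite `p`-groups (equivalently, of cohomological dimension at most one). -/
def IsFreeProP : Prop :=
  IsProPGroup p G ∧
  ∀ (A B : Type) [Group A] [Group B], Finite A → Finite B →
    IsPGroup p A → IsPGroup p B → ∀ f : A →* B, Function.Surjective f →
    ∀ φ : G →* B, @Continuous G B _ ⊥ φ →
      ∃ ψ : G →* A, @Continuous G A _ ⊥ ψ ∧ f.comp ψ = φ

end Frattini

section AuxProofs

open Filter Topology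

variable {p : ℕ} [Fact p.Prime] {G : Type*} [Group G] [TopologicalSpace G] [IsTopologicalGroup G]

lemma padicFilter_neBot (p : ℕ) [Fact p.Prime] (lam : ℤ_[p]) :
    (Filter.comap (fun n : ℤ => (n : ℤ_[p])) (𝓝 lam)).NeBot := by
  rw [Filter.comap_neBot_iff]
  intro t ht
  have := PadicInt.denseRange_intCast (p := p) lam
  rw [mem_closure_iff_nhds] at this
  obtain ⟨y, hy, n, rfl⟩ := this t ht
  exact ⟨n, hy⟩

lemma IsProPGroup.t2 (hG : IsProPGroup p G) : T2Space G := by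
  obtain ⟨h1, h2, -⟩ := hG
  haveI := h1; haveI := h2
  rw [IsTopologicalGroup.t2Space_iff_one_closed]
  rw [← totallyDisconnectedSpace_iff_connectedComponent_singleton.mp h2 1]
  exact isClosed_connectedComponent

/-- In a pro-`p` group, every neighborhood of `1` contains an open normal subgroup. -/
lemma IsProPGroup.exists_openNormal (hG : IsProPGroup p G) {U : Set G} (hU : U ∈ 𝓝 (1 : G)) :
    ∃ H : OpenNormalSubgroup G, (H : Set G) ⊆ U := by
  haveI := hG.1; haveI := hG.2.1
  haveI := IsProPGroup.t2 hG
  obtain ⟨V, hVU, hVopen, h1V⟩ := mem_nhds_iff.mp hU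
  obtain ⟨W, hWclopen, h1W, hWV⟩ := compact_exists_isClopen_in_isOpen hVopen h1V
  obtain ⟨H, hH⟩ := IsTopologicalGroup.exist_openNormalSubgroup_sub_clopen_nhds_of_one hWclopen h1W
  exact ⟨H, fun x hx => hVU (hWV (hH hx))⟩

/-- The key convergence: in a pro-`p` group, `n ↦ h ^ n` converges along the `p`-adic
filter at `lam` to `padicPow p h lam`. -/
lemma IsProPGroup.tendsto_padicPow (hG : IsProPGroup p G) (h : G) (lam : ℤ_[p]) :
    Filter.Tendsto (fun n : ℤ => h ^ n)
      (Filter.comap (fun n : ℤ => (n : ℤ_[p])) (𝓝 lam)) (𝓝 (padicPow p h lam)) := by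
  haveI := hG.1; haveI := hG.2.1
  haveI := IsProPGroup.t2 hG
  haveI : Nonempty G := ⟨1⟩
  set F := Filter.comap (fun n : ℤ => (n : ℤ_[p])) (𝓝 lam) with hF
  haveI : F.NeBot := padicFilter_neBot p lam
  -- for each open normal subgroup, a congruence set
  have main : ∀ H : OpenNormalSubgroup G, ∃ T ∈ F, ∀ n ∈ T, ∀ m ∈ T, h ^ (n - m) ∈ H := by
    intro H
    obtain ⟨k, hk⟩ := hG.2.2 H.toSubgroup inferInstance H.isOpen'
    have hpk : h ^ (p ^ k) ∈ H.toSubgroup := by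
      haveI : Finite (G ⧸ H.toSubgroup) := by
        apply Nat.finite_of_card_ne_zero
        rw [← Subgroup.index_eq_card, hk]
        exact pow_ne_zero _ (Fact.out : p.Prime).ne_zero
      rw [← QuotientGroup.eq_one_iff]
      have : (QuotientGroup.mk' H.toSubgroup) (h ^ (p ^ k)) = 1 := by
        rw [map_pow, ← hk, Subgroup.index_eq_card, pow_card_eq_one']
      simpa using this
    refine ⟨{n : ℤ | ‖(n : ℤ_[p]) - lam‖ ≤ (p : ℝ) ^ (-(k : ℤ))}, ?_, ?_⟩
    · have hr : (0 : ℝ) < (p : ℝ) ^ (-(k : ℤ)) := by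
        apply zpow_pos
        exact_mod_cast (Fact.out : p.Prime).pos
      have hball : Metric.closedBall lam ((p : ℝ) ^ (-(k : ℤ))) ∈ 𝓝 lam :=
        Metric.closedBall_mem_nhds lam hr
      have := Filter.preimage_mem_comap (m := fun n : ℤ => (n : ℤ_[p])) hball
      apply Filter.mem_of_superset this
      intro n hn
      simpa [Metric.mem_closedBall, dist_eq_norm] using hn
    · intro n hn m hm
      have hdvd : ((p : ℤ) ^ k) ∣ (n - m) := by
        rw [← PadicInt.norm_int_le_pow_iff_dvd]
        push_cast
        calc ‖(n : ℤ_[p]) - m‖ = ‖((n : ℤ_[p]) - lam) + (lam - m)‖ := by ring_nf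
          _ ≤ max ‖(n : ℤ_[p]) - lam‖ ‖lam - (m : ℤ_[p])‖ := PadicInt.nonarchimedean _ _
          _ ≤ (p : ℝ) ^ (-(k : ℤ)) := by
            apply max_le hn
            rw [norm_sub_rev]; exact hm
      obtain ⟨c, hc⟩ := hdvd
      rw [hc]
      have : h ^ ((p : ℤ) ^ k * c) = (h ^ ((p ^ k : ℕ) : ℤ)) ^ c := by
        rw [← zpow_mul]; push_cast; ring_nf
      rw [this, zpow_natCast]
      exact Subgroup.zpow_mem _ hpk c
  -- a cluster point
  obtain ⟨x, hx⟩ := exists_clusterPt_of_compactSpace (Filter.map (fun n : ℤ => h ^ n) F)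
  have hten : Filter.Tendsto (fun n : ℤ => h ^ n) F (𝓝 x) := by
    intro U hU
    have hV : (fun y => x * y) ⁻¹' U ∈ 𝓝 (1 : G) := by
      have := (continuous_mul_left x).tendsto 1
      rw [mul_one] at this
      exact this hU
    obtain ⟨H, hHV⟩ := IsProPGroup.exists_openNormal hG hV
    obtain ⟨T, hTF, hT⟩ := main H
    obtain ⟨n₀, hn₀⟩ := Filter.nonempty_of_mem hTF
    have hHclosed : IsClosed ((H : Subgroup G) : Set G) :=
      Subgroup.isClosed_of_isOpen _ H.isOpen'
    set C : Set G := (fun y => h ^ n₀ * y) '' ((H : Subgroup G) : Set G) with hC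
    have hCclosed : IsClosed C := (Homeomorph.mulLeft (h ^ n₀)).isClosedMap _ hHclosed
    have hCmem : C ∈ Filter.map (fun n : ℤ => h ^ n) F := by
      rw [Filter.mem_map]
      apply Filter.mem_of_superset hTF
      intro n hn
      refine ⟨h ^ (n - n₀), hT n hn n₀ hn₀, ?_⟩
      show h ^ n₀ * h ^ (n - n₀) = h ^ n
      rw [← zpow_add]
      ring_nf
    have hxC : x ∈ C := by
      have : ClusterPt x (Filter.principal C) := hx.mono (Filter.le_principal_iff.2 hCmem)
      rw [← mem_closure_iff_clusterPt] at this
      rwa [hCclosed.closure_eq] at this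
    obtain ⟨w, hw, hxw⟩ := hxC
    rw [Filter.mem_map]
    apply Filter.mem_of_superset hTF
    intro n hn
    have hz : w⁻¹ * h ^ (n - n₀) ∈ (H : Subgroup G) :=
      Subgroup.mul_mem _ (Subgroup.inv_mem _ hw) (hT n hn n₀ hn₀)
    have : h ^ n = x * (w⁻¹ * h ^ (n - n₀)) := by
      rw [← hxw]; group
    rw [Set.mem_preimage, this]
    exact hHV hz
  have : padicPow p h lam = x := hten.limUnder_eq
  rwa [this]

lemma IsProPGroup.padicPow_neg (hG : IsProPGroup p G) (a : G) (lam : ℤ_[p]) :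
    padicPow p a (-lam) = (padicPow p a lam)⁻¹ := by
  haveI := IsProPGroup.t2 hG
  haveI : (Filter.comap (fun n : ℤ => (n : ℤ_[p])) (𝓝 (-lam))).NeBot := padicFilter_neBot p _
  have h1 := hG.tendsto_padicPow a lam
  have h2 := hG.tendsto_padicPow a (-lam)
  have hneg : Filter.Tendsto (fun n : ℤ => -n)
      (Filter.comap (fun n : ℤ => (n : ℤ_[p])) (𝓝 (-lam)))
      (Filter.comap (fun n : ℤ => (n : ℤ_[p])) (𝓝 lam)) := by
    rw [Filter.tendsto_comap_iff]
    have : ((fun n : ℤ => (n : ℤ_[p])) ∘ fun n : ℤ => -n) =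
        (fun μ : ℤ_[p] => -μ) ∘ (fun n : ℤ => (n : ℤ_[p])) := by
      funext n; simp
    rw [this]
    have hc : Filter.Tendsto (fun n : ℤ => (n : ℤ_[p]))
        (Filter.comap (fun n : ℤ => (n : ℤ_[p])) (𝓝 (-lam))) (𝓝 (-lam)) :=
      Filter.tendsto_comap
    simpa using (continuous_neg.tendsto (-lam)).comp hc
  have h3 : Filter.Tendsto (fun n : ℤ => a ^ n)
      (Filter.comap (fun n : ℤ => (n : ℤ_[p])) (𝓝 (-lam))) (𝓝 (padicPow p a lam)⁻¹) := by
    have := ((continuous_inv.tendsto _).comp h1).comp hneg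
    convert this using 1
    funext n
    simp [Function.comp]
  exact tendsto_nhds_unique h2 h3

lemma IsProPGroup.padicPow_map {A : Type*} [Group A] [TopologicalSpace A] [IsTopologicalGroup A]
    (hG : IsProPGroup p G) (hA : IsProPGroup p A) (ψ : G →* A) (hψ : Continuous ψ)
    (h : G) (lam : ℤ_[p]) : ψ (padicPow p h lam) = padicPow p (ψ h) lam := by
  haveI := IsProPGroup.t2 hA
  haveI : (Filter.comap (fun n : ℤ => (n : ℤ_[p])) (𝓝 lam)).NeBot := padicFilter_neBot p _
  have h1 : Filter.Tendsto (fun n : ℤ => (ψ h) ^ n)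
      (Filter.comap (fun n : ℤ => (n : ℤ_[p])) (𝓝 lam)) (𝓝 (ψ (padicPow p h lam))) := by
    have := (hψ.tendsto _).comp (hG.tendsto_padicPow h lam)
    convert this using 1
    funext n
    simp [Function.comp, map_zpow]
  exact tendsto_nhds_unique h1 (hA.tendsto_padicPow (ψ h) lam)

end AuxProofs

attribute [local instance] Subgroup.is_normal_topologicalClosure
/-- If `(A,θ°)` is `θ°`-abelian and `ψ : (G,θ) → (A,θ°)` is a morphism
of oriented pro-`p` groups, then `ψ(K_θ(G)) = 1`, `ψ(I_θ(G)) = 1`, and hence `ψ` factors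
(uniquely) through `G(θ) = G/I_θ(G)`. -/
theorem stmt2 (p : ℕ) [Fact p.Prime] (G A : Type) [Group G] [TopologicalSpace G]
    [IsTopologicalGroup G] [Group A] [TopologicalSpace A] [IsTopologicalGroup A]
    (hG : IsProPGroup p G) (hA : IsProPGroup p A)
    (θ : G →* ℤ_[p]ˣ) (θ₀ : A →* ℤ_[p]ˣ) (hab : IsThetaAbelian p θ₀)
    (ψ : G →* A) (hψ : Continuous ψ) (hcomp : θ = θ₀.comp ψ) :
    (∀ x ∈ Ktheta p θ, ψ x = 1) ∧
    (∀ x ∈ Itheta p θ, ψ x = 1) ∧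
    (∀ x y : G, x⁻¹ * y ∈ Itheta p θ → ψ x = ψ y) := by
  haveI := IsProPGroup.t2 hA
  have hkerclosed : IsClosed (ψ.ker : Set G) := by
    have : (ψ.ker : Set G) = ψ ⁻¹' {1} := by
      ext x; simp [MonoidHom.mem_ker]
    rw [this]
    exact IsClosed.preimage hψ isClosed_singleton
  have hK : ∀ x ∈ Ktheta p θ, ψ x = 1 := by
    have hle : Ktheta p θ ≤ ψ.ker := by
      apply Subgroup.topologicalClosure_minimal _ _ hkerclosed
      rw [Subgroup.closure_le]
      rintro x ⟨g, h, hh, rfl⟩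
      have hψh : ψ h ∈ θ₀.ker := by
        rw [MonoidHom.mem_ker]
        have : θ h = 1 := hh
        rw [hcomp] at this
        exact this
      have hconj : ψ g * ψ h * (ψ g)⁻¹ =
          padicPow p (ψ h) ((θ₀ (ψ g) : ℤ_[p]ˣ) : ℤ_[p]) := hab.2.2 (ψ g) (ψ h) hψh
      have hθ : ((θ g : ℤ_[p]ˣ) : ℤ_[p]) = ((θ₀ (ψ g) : ℤ_[p]ˣ) : ℤ_[p]) := by
        rw [hcomp]; rfl
      rw [SetLike.mem_coe, MonoidHom.mem_ker, map_mul]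
      rw [hG.padicPow_map hA ψ hψ, hθ]
      have : ψ (g * h * g⁻¹) = ψ g * ψ h * (ψ g)⁻¹ := by
        simp [map_mul]
      rw [this, hconj, hA.padicPow_neg, inv_mul_cancel]
    intro x hx
    exact hle hx
  refine ⟨hK, ?_, ?_⟩
  · have hle : Itheta p θ ≤ ψ.ker := by
      apply Subgroup.topologicalClosure_minimal _ _ hkerclosed
      rw [Subgroup.closure_le]
      rintro g ⟨hg, k, hgk⟩
      have hψg : ψ g ∈ θ₀.ker := by
        rw [MonoidHom.mem_ker]
        have : θ g = 1 := hg
        rw [hcomp] at this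
        exact this
      have hpow : (ψ g) ^ (p ^ k) = 1 := by
        rw [← map_pow]
        exact hK _ hgk
      rw [SetLike.mem_coe, MonoidHom.mem_ker]
      exact hab.2.1 (ψ g) hψg (p ^ k) (pow_ne_zero _ (Fact.out : p.Prime).ne_zero) hpow
    intro x hx
    exact hle hx
  · intro x y hxy
    have hle : Itheta p θ ≤ ψ.ker := by
      apply Subgroup.topologicalClosure_minimal _ _ hkerclosed
      rw [Subgroup.closure_le]
      rintro g ⟨hg, k, hgk⟩
      have hψg : ψ g ∈ θ₀.ker := by
        rw [MonoidHom.mem_ker]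
        have : θ g = 1 := hg
        rw [hcomp] at this
        exact this
      have hpow : (ψ g) ^ (p ^ k) = 1 := by
        rw [← map_pow]
        exact hK _ hgk
      rw [SetLike.mem_coe, MonoidHom.mem_ker]
      exact hab.2.1 (ψ g) hψg (p ^ k) (pow_ne_zero _ (Fact.out : p.Prime).ne_zero) hpow
    have : ψ (x⁻¹ * y) = 1 := hle hxy
    rw [map_mul, map_inv] at this
    have := congrArg (fun z => ψ x * z) this
    simpa [mul_assoc] using this.symm
end

section
/- Let (G,θ) be a torsion-free oriented pro-ℓ group (i.e., ℓ ≠ 2, or ℓ = 2 and im(θ) ⊆ 1 + 4ℤ_2). Then the following are equivalent: (i) (G,θ) is θ-abelian; (ii) G is isomorphic as an oriented pro-ℓ group to a semidirect product A ⋊ (G/ker θ) with A a free abelian pro-ℓ group on which G/ker θ acts via θ; (iii) K_θ(G) = {1} and ker(θ) is a free abelian pro-ℓ group. -/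
open scoped Topology

namespace Stmt3Aux
open Filter Topology
set_option maxHeartbeats 1000000
set_option linter.unusedSectionVars false


variable {p : ℕ} [Fact p.Prime]

lemma binom (s : ℤ_[p]) : ∀ t : ℕ, ∃ q : ℤ_[p],
    (1+s)^t = 1 + t*s + s^2*((t.choose 2 : ℕ) + s*q) := by
  intro t
  induction t with
  | zero => exact ⟨0, by norm_num⟩
  | succ t ih =>
    obtain ⟨q, hq⟩ := ih
    refine ⟨q + (t.choose 2 : ℕ) + s*q, ?_⟩
    rw [pow_succ, hq, Nat.choose_succ_succ t 1, Nat.choose_one_right]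
    push_cast
    ring

lemma isUnit_iff_not_dvd (z : ℤ_[p]) : IsUnit z ↔ ¬ (p:ℤ_[p]) ∣ z := by
  rw [PadicInt.isUnit_iff, ← PadicInt.norm_lt_one_iff_dvd]
  constructor
  · intro h h'; rw [h] at h'; exact lt_irrefl 1 h'
  · intro h; exact le_antisymm (PadicInt.norm_le_one z) (not_lt.mp h)

lemma pow_dvd_iff_norm_le (z : ℤ_[p]) (n : ℕ) :
    (p:ℤ_[p])^n ∣ z ↔ ‖z‖ ≤ (p:ℝ)^(-(n:ℤ)) := by
  rw [PadicInt.norm_le_pow_iff_mem_span_pow, Ideal.mem_span_singleton]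

lemma nat_dvd_iff (m : ℕ) : (p:ℤ_[p]) ∣ (m : ℤ_[p]) ↔ p ∣ m := by
  have h1 : ((m:ℤ) : ℤ_[p]) = (m : ℤ_[p]) := Int.cast_natCast m
  have h2 := pow_dvd_iff_norm_le (p := p) (m : ℤ_[p]) 1
  rw [pow_one] at h2
  rw [h2, ← h1, PadicInt.norm_int_le_pow_iff_dvd]
  constructor
  · intro h
    have : (p:ℤ)^1 ∣ (m:ℤ) := h
    rw [pow_one] at this
    exact_mod_cast this
  · intro h
    have : (p:ℤ) ∣ (m:ℤ) := by exact_mod_cast h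
    rwa [pow_one]

/-- single step: `(1+p^m w)^p = 1+p^(m+1) w'` with `w'` a unit. -/
lemma step_pow (m : ℕ) (hm : 1 ≤ m) (hm2 : p = 2 → 2 ≤ m) (w : ℤ_[p]) (hw : IsUnit w) :
    ∃ w', IsUnit w' ∧ (1 + (p:ℤ_[p])^m * w)^p = 1 + (p:ℤ_[p])^(m+1) * w' := by
  obtain ⟨m', rfl⟩ : ∃ m', m = m' + 1 := ⟨m - 1, by omega⟩
  obtain ⟨q, hq⟩ := binom ((p:ℤ_[p])^(m'+1) * w) p
  refine ⟨w + (p:ℤ_[p])^m' * w^2 * ((p.choose 2 : ℕ) + (p:ℤ_[p])^(m'+1) * w * q), ?_, ?_⟩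
  · rw [isUnit_iff_not_dvd] at hw ⊢
    intro hdvd
    apply hw
    have hdvd2 : (p:ℤ_[p]) ∣ (p:ℤ_[p])^m' * w^2 * ((p.choose 2 : ℕ) + (p:ℤ_[p])^(m'+1) * w * q) := by
      rcases Nat.eq_zero_or_pos m' with hm' | hm'
      · subst hm'
        have hp2 : p ≠ 2 := by intro h; have := hm2 h; omega
        have hpodd : (p:ℤ_[p]) ∣ ((p.choose 2 : ℕ) : ℤ_[p]) := by
          rw [nat_dvd_iff]
          exact (Fact.out : p.Prime).dvd_choose_self (by norm_num)
            (by have := (Fact.out : p.Prime).two_le; omega)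
        obtain ⟨c, hc⟩ := hpodd
        refine ⟨w^2 * (c + (p:ℤ_[p])^0 * w * q), ?_⟩
        rw [hc]; ring
      · obtain ⟨m'', rfl⟩ : ∃ m'', m' = m'' + 1 := ⟨m' - 1, by omega⟩
        exact ⟨(p:ℤ_[p])^m'' * w^2 * ((p.choose 2 : ℕ) + (p:ℤ_[p])^(m''+2) * w * q), by ring⟩
    obtain ⟨c, hc⟩ := hdvd2
    obtain ⟨d, hd⟩ := hdvd
    exact ⟨d - c, by rw [mul_sub, ← hd, ← hc]; ring⟩
  · rw [hq]
    ring

lemma pow_p_pow (v : ℕ) (hv : 1 ≤ v) (hv2 : p = 2 → 2 ≤ v) (u : ℤ_[p]) (hu : IsUnit u) (k : ℕ) :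
    ∃ w, IsUnit w ∧ (1 + (p:ℤ_[p])^v * u)^(p^k) = 1 + (p:ℤ_[p])^(v+k) * w := by
  induction k with
  | zero => exact ⟨u, hu, by norm_num⟩
  | succ k ih =>
    obtain ⟨w, hw, hwe⟩ := ih
    obtain ⟨w', hw', hwe'⟩ := step_pow (v+k) (by omega) (fun h => by have := hv2 h; omega) w hw
    refine ⟨w', hw', ?_⟩
    rw [pow_succ, pow_mul, hwe, hwe']
    ring_nf

lemma pow_coprime (v : ℕ) (hv : 1 ≤ v) (u : ℤ_[p]) (hu : IsUnit u) (m : ℕ) (hm : ¬ p ∣ m) :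
    ∃ w, IsUnit w ∧ (1 + (p:ℤ_[p])^v * u)^m = 1 + (p:ℤ_[p])^v * w := by
  obtain ⟨q, hq⟩ := binom ((p:ℤ_[p])^v * u) m
  obtain ⟨v', rfl⟩ : ∃ v', v = v' + 1 := ⟨v - 1, by omega⟩
  refine ⟨(m:ℤ_[p]) * u + (p:ℤ_[p])^(v'+1) * u^2 * ((m.choose 2:ℕ) + (p:ℤ_[p])^(v'+1) * u * q), ?_, ?_⟩
  · rw [isUnit_iff_not_dvd]
    intro hdvd
    have h1 : (p:ℤ_[p]) ∣ (m:ℤ_[p]) * u := by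
      obtain ⟨c, hc⟩ := hdvd
      exact ⟨c - (p:ℤ_[p])^v' * u^2 * ((m.choose 2:ℕ) + (p:ℤ_[p])^(v'+1) * u * q), by
        rw [mul_sub, ← hc]; ring⟩
    rcases (PadicInt.prime_p).2.2 _ _ h1 with h | h
    · rw [nat_dvd_iff] at h; exact hm h
    · rw [isUnit_iff_not_dvd] at hu; exact hu h
  · rw [hq]
    ring


lemma nat_approx (z : ℤ_[p]) : ∃ t : ℕ, (p:ℤ_[p]) ∣ (z - t) := by
  obtain ⟨t, ht⟩ := PadicInt.denseRange_natCast.exists_dist_lt z one_pos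
  refine ⟨t, (PadicInt.norm_lt_one_iff_dvd _).mp ?_⟩
  rwa [dist_eq_norm] at ht

lemma exists_not_pow_dvd (z : ℤ_[p]) (hz : z ≠ 0) : ∃ k : ℕ, ¬ (p:ℤ_[p])^(k+1) ∣ z := by
  by_contra hcon
  push_neg at hcon
  apply hz
  have hp1 : (1:ℝ) < p := by exact_mod_cast (Fact.out : p.Prime).one_lt
  have hnz : 0 < ‖z‖ := norm_pos_iff.mpr hz
  obtain ⟨k, hk⟩ := exists_pow_lt_of_lt_one hnz (by
    rw [inv_lt_one_iff₀]; right; exact hp1 : (p:ℝ)⁻¹ < 1)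
  exfalso
  have h1 := (pow_dvd_iff_norm_le z (k+1)).mp (hcon k)
  have h2 : ((p:ℝ))^(-((k+1:ℕ)):ℤ) ≤ ((p:ℝ)⁻¹)^k := by
    have he : ((p:ℝ))^(-((k+1:ℕ)):ℤ) = ((p:ℝ)⁻¹)^(k+1) := by
      rw [zpow_neg, zpow_natCast, inv_pow]
    rw [he]
    exact pow_le_pow_of_le_one (by positivity)
      (by rw [inv_le_one_iff₀]; right; linarith) (by omega)
  linarith [lt_of_le_of_lt (h1.trans h2) hk]

lemma density_step (v'' k : ℕ) (hv2 : p = 2 → 2 ≤ v'' + 1) (u : ℤ_[p]) (hu : IsUnit u)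
    (y : ℤ_[p]) (n : ℕ)
    (hc : (p:ℤ_[p])^(v''+1+k) ∣ (y - (1 + (p:ℤ_[p])^(v''+1) * u)^n)) :
    ∃ n' : ℕ, (p:ℤ_[p])^(v''+1+k+1) ∣ (y - (1 + (p:ℤ_[p])^(v''+1) * u)^n') := by
  set v := v'' + 1 with hv
  set x := 1 + (p:ℤ_[p])^v * u with hxdef
  obtain ⟨c, hc⟩ := hc
  have hxu : IsUnit x := by
    rw [isUnit_iff_not_dvd]
    intro hdvd
    obtain ⟨a, ha⟩ := hdvd
    have : (p:ℤ_[p]) ∣ 1 := ⟨a - (p:ℤ_[p])^v'' * u, by rw [mul_sub]; rw [← ha]; rw [hxdef]; ring⟩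
    have := (isUnit_iff_not_dvd (1:ℤ_[p])).mp isUnit_one
    exact this ‹_›
  obtain ⟨x', hxx'⟩ := hxu.exists_right_inv
  obtain ⟨w, hw, hwe⟩ := pow_p_pow v (by omega) hv2 u hu k
  obtain ⟨w', hww'⟩ := hw.exists_right_inv
  obtain ⟨t, e, he⟩ : ∃ (t : ℕ) (e : ℤ_[p]), c * x'^n * w' - t = p * e := by
    obtain ⟨t, ht⟩ := nat_approx (c * x'^n * w')
    obtain ⟨e, he⟩ := ht
    exact ⟨t, e, he⟩
  obtain ⟨q, hq⟩ := binom ((p:ℤ_[p])^(v+k) * w) t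
  refine ⟨n + p^k * t, ?_⟩
  refine ⟨x^n * (w * e - (p:ℤ_[p])^(v''+k) * w^2 * ((t.choose 2 : ℕ) + (p:ℤ_[p])^(v+k) * w * q)), ?_⟩
  have h1 : x^n * x'^n = 1 := by rw [← mul_pow, hxx', one_pow]
  rw [pow_add, pow_mul, hwe, hq, hv]
  linear_combination hc + (p:ℤ_[p])^(v''+1+k) * w * x^n * he -
    (p:ℤ_[p])^(v''+1+k) * c * w * w' * h1 - (p:ℤ_[p])^(v''+1+k) * c * hww'

lemma density (v : ℕ) (hv : 1 ≤ v) (hv2 : p = 2 → 2 ≤ v) (u : ℤ_[p]) (hu : IsUnit u)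
    (y : ℤ_[p]) (hy : (p:ℤ_[p])^v ∣ (y - 1)) (k : ℕ) :
    ∃ n : ℕ, (p:ℤ_[p])^(v+k) ∣ (y - (1 + (p:ℤ_[p])^v * u)^n) := by
  obtain ⟨v'', rfl⟩ : ∃ v'', v = v'' + 1 := ⟨v - 1, by omega⟩
  induction k with
  | zero => exact ⟨0, by simpa using hy⟩
  | succ k ih =>
    obtain ⟨n, hn⟩ := ih
    exact density_step v'' k hv2 u hu y n hn

lemma norm_pow_sub_one (v : ℕ) (hv : 1 ≤ v) (hv2 : p = 2 → 2 ≤ v) (u : ℤ_[p]) (hu : IsUnit u)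
    (j m : ℕ) (hm : ¬ p ∣ m) :
    ‖(1 + (p:ℤ_[p])^v * u)^(p^j * m) - 1‖ = (p:ℝ)^(-((v+j:ℕ)):ℤ) := by
  rw [pow_mul]
  obtain ⟨w, hw, hwe⟩ := pow_p_pow v hv hv2 u hu j
  rw [hwe]
  obtain ⟨w', hw', hwe'⟩ := pow_coprime (v+j) (by omega) w hw m hm
  rw [hwe', add_sub_cancel_left, norm_mul, PadicInt.norm_p_pow,
    PadicInt.isUnit_iff.mp hw', mul_one]

lemma norm_zpow_sub_one (X : ℤ_[p]ˣ) (v : ℕ) (hv : 1 ≤ v) (hv2 : p = 2 → 2 ≤ v)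
    (u : ℤ_[p]) (hu : IsUnit u) (hX : (X:ℤ_[p]) = 1 + (p:ℤ_[p])^v * u)
    (n : ℤ) (j : ℕ) (h1 : (p:ℤ)^j ∣ n) (h2 : ¬ (p:ℤ)^(j+1) ∣ n) :
    ‖((X^n : ℤ_[p]ˣ) : ℤ_[p]) - 1‖ = (p:ℝ)^(-((v+j:ℕ)):ℤ) := by
  set N := n.natAbs with hN
  have hd1 : p^j ∣ N := by
    have h := Int.natAbs_dvd_natAbs.mpr h1
    simp only [Int.natAbs_pow, Int.natAbs_natCast] at h
    exact h
  have hd2 : ¬ p^(j+1) ∣ N := by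
    intro hcon
    apply h2
    have : ((p^(j+1) : ℕ) : ℤ) ∣ (N : ℤ) := Int.natCast_dvd_natCast.mpr hcon
    rcases Int.natAbs_eq n with h | h
    · rw [h]; exact_mod_cast this
    · rw [h]; exact Dvd.dvd.neg_right (by exact_mod_cast this)
  obtain ⟨m, hNm⟩ := hd1
  have hm : ¬ p ∣ m := by
    rintro ⟨m', rfl⟩
    exact hd2 ⟨m', by rw [hNm, pow_succ]; ring⟩
  have key : ‖((X:ℤ_[p]))^N - 1‖ = (p:ℝ)^(-((v+j:ℕ)):ℤ) := by
    rw [hX, hNm]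
    exact norm_pow_sub_one v hv hv2 u hu j m hm
  rcases Int.natAbs_eq n with h | h
  · rw [h, zpow_natCast, Units.val_pow_eq_pow_val]
    exact key
  · rw [h, zpow_neg, zpow_natCast]
    have hab : ((X^N)⁻¹ : ℤ_[p]ˣ).val * ((X^N : ℤ_[p]ˣ) : ℤ_[p]) = 1 := by
      rw [← Units.val_mul, inv_mul_cancel, Units.val_one]
    have heq : ((X^N)⁻¹ : ℤ_[p]ˣ).val - 1
        = ((X^N)⁻¹ : ℤ_[p]ˣ).val * (1 - ((X^N : ℤ_[p]ˣ) : ℤ_[p])) := by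
      rw [mul_sub, hab, mul_one]
    rw [heq, norm_mul, PadicInt.norm_units, one_mul, norm_sub_rev]
    rw [Units.val_pow_eq_pow_val]
    exact key



variable {p : ℕ} [Fact p.Prime]

noncomputable def Ffil (p : ℕ) [Fact p.Prime] (lam : ℤ_[p]) : Filter ℤ :=
  Filter.comap (fun n : ℤ => (n : ℤ_[p])) (𝓝 lam)

lemma Ffil_neBot (lam : ℤ_[p]) : (Ffil p lam).NeBot := by
  apply Filter.comap_neBot
  intro t ht
  have hd : lam ∈ closure (Set.range (fun n:ℤ => (n:ℤ_[p]))) := PadicInt.denseRange_intCast lam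
  rw [mem_closure_iff_nhds] at hd
  obtain ⟨y, hyt, ⟨n, rfl⟩⟩ := hd t ht
  exact ⟨n, hyt⟩

lemma ball_mem_nhds' (lam : ℤ_[p]) (k : ℕ) :
    {z : ℤ_[p] | ‖z - lam‖ ≤ (p:ℝ)^(-(k:ℤ))} ∈ 𝓝 lam := by
  have h := Metric.closedBall_mem_nhds lam (ε := (p:ℝ)^(-(k:ℤ))) (by
    have : (0:ℝ) < p := by exact_mod_cast (Fact.out : p.Prime).pos
    positivity)
  refine Filter.mem_of_superset h ?_
  intro z hz
  rw [Metric.mem_closedBall, dist_eq_norm] at hz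
  exact hz

lemma Sk_mem (lam : ℤ_[p]) (k : ℕ) :
    {n : ℤ | ‖(n:ℤ_[p]) - lam‖ ≤ (p:ℝ)^(-(k:ℤ))} ∈ Ffil p lam :=
  Filter.preimage_mem_comap (ball_mem_nhds' lam k)

lemma int_dvd_of_norm_le {n m : ℤ} {k : ℕ}
    (h : ‖(n:ℤ_[p]) - (m:ℤ_[p])‖ ≤ (p:ℝ)^(-(k:ℤ))) : (p:ℤ)^k ∣ (n - m) := by
  have h1 : ‖((n - m : ℤ):ℤ_[p])‖ ≤ (p:ℝ)^(-(k:ℤ)) := by push_cast; exact h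
  have h2 := PadicInt.norm_int_le_pow_iff_dvd (k := n - m) (n := k) |>.mp h1
  exact_mod_cast h2

variable {G : Type*} [Group G] [TopologicalSpace G] [IsTopologicalGroup G]

lemma zpow_dvd_mem (U : Subgroup G) {k : ℕ} (hUk : ∀ x : G, x^(p^k) ∈ U) (h : G) {n : ℤ}
    (hd : (p:ℤ)^k ∣ n) : h^n ∈ U := by
  obtain ⟨d, hd⟩ := hd
  have : h^n = (h^((p^k : ℕ):ℤ))^d := by
    rw [← zpow_mul, hd]
    norm_num
  rw [this, zpow_natCast]
  exact U.zpow_mem (hUk h) d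

section WithHO

variable (hO : ∀ N ∈ 𝓝 (1:G), ∃ U : Subgroup G,
    IsOpen (U:Set G) ∧ (U:Set G) ⊆ N ∧ ∃ k:ℕ, ∀ x:G, x^(p^k) ∈ U)

include hO

lemma tendsto_translate (h : G) (lam : ℤ_[p]) (a : G)
    (H : ∀ (U : Subgroup G), IsOpen (U:Set G) → ∀ k:ℕ, (∀ x:G, x^(p^k) ∈ U) →
      ∃ᶠ n in Ffil p lam, a⁻¹ * h^n ∈ U) :
    Filter.Tendsto (fun n:ℤ => h^n) (Ffil p lam) (𝓝 a) := by
  rw [Filter.tendsto_def]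
  intro N hN
  have hN1 : (fun y => a * y)⁻¹' N ∈ 𝓝 (1:G) := by
    apply (continuous_mul_left a).continuousAt.preimage_mem_nhds
    rwa [mul_one]
  obtain ⟨U, hUopen, hUsub, k, hUk⟩ := hO _ hN1
  obtain ⟨n₀, hn₀U, hn₀S⟩ := ((H U hUopen k hUk).and_eventually (Sk_mem lam k)).exists
  refine Filter.mem_of_superset (Sk_mem lam k) ?_
  intro m hm
  have hdv : (p:ℤ)^k ∣ (m - n₀) := by
    apply int_dvd_of_norm_le
    have : (m:ℤ_[p]) - (n₀:ℤ_[p]) = ((m:ℤ_[p]) - lam) + -((n₀:ℤ_[p]) - lam) := by ring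
    rw [this]
    refine le_trans (PadicInt.nonarchimedean _ _) (max_le hm ?_)
    rwa [norm_neg]
  have h2 : h^(m - n₀) ∈ U := zpow_dvd_mem U hUk h hdv
  have hmem : a⁻¹ * h^m ∈ U := by
    have he : a⁻¹ * h^m = (a⁻¹ * h^n₀) * h^(m - n₀) := by
      rw [mul_assoc, ← zpow_add]
      congr 2
      omega
    rw [he]
    exact U.mul_mem hn₀U h2
  have := hUsub hmem
  simpa using this

lemma exists_limit [CompactSpace G] (h : G) (lam : ℤ_[p]) :
    ∃ a, Filter.Tendsto (fun n:ℤ => h^n) (Ffil p lam) (𝓝 a) := by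
  haveI := Ffil_neBot lam
  haveI : (Filter.map (fun n:ℤ => h^n) (Ffil p lam)).NeBot := this.map _
  obtain ⟨a, ha⟩ := exists_clusterPt_of_compactSpace (Filter.map (fun n:ℤ => h^n) (Ffil p lam))
  refine ⟨a, tendsto_translate hO h lam a ?_⟩
  intro U hUopen k hUk
  have hV : {y : G | a⁻¹ * y ∈ U} ∈ 𝓝 a := by
    apply IsOpen.mem_nhds
    · exact hUopen.preimage (continuous_mul_left a⁻¹)
    · show a⁻¹ * a ∈ U
      rw [inv_mul_cancel]
      exact U.one_mem
  rw [Filter.frequently_iff]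
  intro W hW
  have hWmap : (fun n:ℤ => h^n) '' W ∈ Filter.map (fun n:ℤ => h^n) (Ffil p lam) := by
    rw [Filter.mem_map]
    exact Filter.mem_of_superset hW (Set.subset_preimage_image _ _)
  obtain ⟨y, hyV, hyW⟩ := clusterPt_iff_nonempty.mp ha hV hWmap
  obtain ⟨n, hnW, rfl⟩ := hyW
  exact ⟨n, hnW, hyV⟩

lemma tendsto_padicPow [CompactSpace G] (h : G) (lam : ℤ_[p]) :
    Filter.Tendsto (fun n:ℤ => h^n) (Ffil p lam) (𝓝 (padicPow p h lam)) := by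
  haveI : Nonempty G := ⟨1⟩
  exact tendsto_nhds_limUnder (exists_limit hO h lam)

variable [CompactSpace G] [T2Space G]

lemma padicPow_int (h : G) (n₀ : ℤ) : padicPow p h ((n₀:ℤ_[p])) = h^n₀ := by
  haveI := Ffil_neBot (p := p) ((n₀:ℤ_[p]))
  refine tendsto_nhds_unique (tendsto_padicPow hO h _) ?_
  apply tendsto_translate hO h _ (h^n₀)
  intro U hUopen k hUk
  apply Filter.Eventually.frequently
  refine Filter.mem_of_superset (Sk_mem _ k) ?_
  intro m hm
  have hdv : (p:ℤ)^k ∣ (m - n₀) := int_dvd_of_norm_le hm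
  show (h^n₀)⁻¹ * h^m ∈ U
  have he : (h^n₀)⁻¹ * h^m = h^(m - n₀) := by
    rw [← zpow_neg, ← zpow_add]
    congr 1
    omega
  rw [he]
  exact zpow_dvd_mem U hUk h hdv

lemma padicPow_zero (h : G) : padicPow p h 0 = 1 := by
  have := padicPow_int hO h 0
  simpa using this

lemma padicPow_add (h : G) (a b : ℤ_[p]) :
    padicPow p h (a + b) = padicPow p h a * padicPow p h b := by
  set F2 := Filter.comap (fun nm : ℤ×ℤ => ((nm.1:ℤ_[p]), (nm.2:ℤ_[p]))) (𝓝 (a,b)) with hF2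
  haveI : F2.NeBot := by
    apply Filter.comap_neBot
    intro t ht
    have hd : (a,b) ∈ closure (Set.range (fun nm : ℤ×ℤ => ((nm.1:ℤ_[p]), (nm.2:ℤ_[p])))) := by
      have := (PadicInt.denseRange_intCast (p := p)).prodMap
        (PadicInt.denseRange_intCast (p := p))
      exact this (a, b)
    rw [mem_closure_iff_nhds] at hd
    obtain ⟨y, hyt, ⟨nm, rfl⟩⟩ := hd t ht
    exact ⟨nm, hyt⟩
  have hemb : Filter.Tendsto (fun nm : ℤ×ℤ => ((nm.1:ℤ_[p]),(nm.2:ℤ_[p]))) F2 (𝓝 (a,b)) :=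
    tendsto_comap
  have hc1 : Filter.Tendsto (fun nm : ℤ×ℤ => ((nm.1:ℤ_[p]))) F2 (𝓝 a) :=
    (continuous_fst.tendsto (a,b)).comp hemb
  have hc2 : Filter.Tendsto (fun nm : ℤ×ℤ => ((nm.2:ℤ_[p]))) F2 (𝓝 b) :=
    (continuous_snd.tendsto (a,b)).comp hemb
  have h1 : Filter.Tendsto (fun nm : ℤ×ℤ => nm.1) F2 (Ffil p a) := by
    rw [Ffil, Filter.tendsto_comap_iff]
    exact hc1
  have h2 : Filter.Tendsto (fun nm : ℤ×ℤ => nm.2) F2 (Ffil p b) := by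
    rw [Ffil, Filter.tendsto_comap_iff]
    exact hc2
  have hsum : Filter.Tendsto (fun nm : ℤ×ℤ => nm.1 + nm.2) F2 (Ffil p (a+b)) := by
    rw [Ffil, Filter.tendsto_comap_iff]
    have : (fun nm : ℤ×ℤ => (((nm.1 + nm.2 : ℤ)):ℤ_[p])) =
        fun nm : ℤ×ℤ => ((nm.1:ℤ_[p]) + (nm.2:ℤ_[p])) := by
      funext nm; push_cast; ring
    show Filter.Tendsto ((fun n:ℤ => (n:ℤ_[p])) ∘ (fun nm : ℤ×ℤ => nm.1 + nm.2)) F2 (𝓝 (a+b))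
    have he : ((fun n:ℤ => (n:ℤ_[p])) ∘ (fun nm : ℤ×ℤ => nm.1 + nm.2)) =
        fun nm : ℤ×ℤ => ((nm.1:ℤ_[p]) + (nm.2:ℤ_[p])) := by
      funext nm; simp
    rw [he]
    exact hc1.add hc2
  have hA : Filter.Tendsto (fun nm : ℤ×ℤ => h^(nm.1 + nm.2)) F2 (𝓝 (padicPow p h (a+b))) :=
    (tendsto_padicPow hO h (a+b)).comp hsum
  have hB : Filter.Tendsto (fun nm : ℤ×ℤ => h^nm.1 * h^nm.2) F2
      (𝓝 (padicPow p h a * padicPow p h b)) :=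
    ((tendsto_padicPow hO h a).comp h1).mul ((tendsto_padicPow hO h b).comp h2)
  have he : (fun nm : ℤ×ℤ => h^(nm.1 + nm.2)) = fun nm : ℤ×ℤ => h^nm.1 * h^nm.2 := by
    funext nm; exact zpow_add h _ _
  rw [he] at hA
  exact tendsto_nhds_unique hA hB

lemma padicPow_neg (h : G) (a : ℤ_[p]) : padicPow p h (-a) = (padicPow p h a)⁻¹ := by
  haveI := Ffil_neBot (p := p) a
  have hneg : Filter.Tendsto (fun n:ℤ => -n) (Ffil p a) (Ffil p (-a)) := by
    simp only [Ffil]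
    rw [Filter.tendsto_comap_iff]
    show Filter.Tendsto ((fun n:ℤ => (n:ℤ_[p])) ∘ (fun n:ℤ => -n)) (Ffil p a) (𝓝 (-a))
    have he : ((fun n:ℤ => (n:ℤ_[p])) ∘ (fun n:ℤ => -n)) = fun n:ℤ => -(n:ℤ_[p]) := by
      funext n; simp
    rw [he]
    exact Filter.Tendsto.neg tendsto_comap
  have hA : Filter.Tendsto (fun n:ℤ => h^(-n)) (Ffil p a) (𝓝 (padicPow p h (-a))) :=
    (tendsto_padicPow hO h (-a)).comp hneg
  have hB : Filter.Tendsto (fun n:ℤ => (h^n)⁻¹) (Ffil p a) (𝓝 (padicPow p h a)⁻¹) :=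
    (tendsto_padicPow hO h a).inv
  have he : (fun n:ℤ => h^(-n)) = fun n:ℤ => (h^n)⁻¹ := by
    funext n; exact zpow_neg h n
  rw [he] at hA
  exact tendsto_nhds_unique hA hB

lemma padicPow_continuous (h : G) : Continuous (padicPow p h) := by
  rw [continuous_iff_continuousAt]
  intro lam
  rw [ContinuousAt, Filter.tendsto_def]
  intro N hN
  have hN1 : (fun y => padicPow p h lam * y)⁻¹' N ∈ 𝓝 (1:G) := by
    apply (continuous_mul_left _).continuousAt.preimage_mem_nhds
    rwa [mul_one]
  obtain ⟨U, hUopen, hUsub, k, hUk⟩ := hO _ hN1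
  refine Filter.mem_of_superset (ball_mem_nhds' lam k) ?_
  intro mu hmu
  have hU' : padicPow p h (mu - lam) ∈ U := by
    have hcl : IsClosed (U:Set G) := Subgroup.isClosed_of_isOpen U hUopen
    haveI := Ffil_neBot (p := p) (mu - lam)
    apply hcl.mem_of_tendsto (tendsto_padicPow hO h (mu - lam))
    filter_upwards [Sk_mem (mu - lam) k] with n hn
    have hdvd : (p:ℤ)^k ∣ n := by
      have h0 : ‖(n:ℤ_[p]) - ((0:ℤ):ℤ_[p])‖ ≤ (p:ℝ)^(-(k:ℤ)) := by
        have : (n:ℤ_[p]) - ((0:ℤ):ℤ_[p]) = ((n:ℤ_[p]) - (mu - lam)) + (mu - lam) := by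
          push_cast; ring
        rw [this]
        exact le_trans (PadicInt.nonarchimedean _ _) (max_le hn hmu)
      have := int_dvd_of_norm_le h0
      simpa using this
    exact zpow_dvd_mem U hUk h hdvd
  have heq : padicPow p h mu = padicPow p h lam * padicPow p h (mu - lam) := by
    rw [← padicPow_add hO h lam (mu - lam)]
    congr 1
    ring
  have hthis := hUsub hU'
  rw [Set.mem_preimage] at hthis
  show padicPow p h mu ∈ N
  rw [heq]
  exact hthis

lemma padicPow_injective (h₀ : G) (htor : ∀ k:ℕ, h₀ ^ (p^k) = 1 → h₀ = 1) (hne : h₀ ≠ 1) :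
    Function.Injective (padicPow p h₀) := by
  have hker : ∀ ν : ℤ_[p], padicPow p h₀ ν = 1 → ν = 0 := by
    intro ν hν
    by_contra hν0
    apply hne
    set j := (ν.valuation) with hj
    have hspec : ν = (PadicInt.unitCoeff hν0 : ℤ_[p]) * (p:ℤ_[p])^j :=
      PadicInt.unitCoeff_spec hν0
    have hZν : ∀ n : ℤ, padicPow p h₀ ((n:ℤ_[p]) * ν) = 1 := by
      intro n
      induction n using Int.induction_on with
      | zero => rw [Int.cast_zero, zero_mul]; exact padicPow_zero hO h₀
      | succ n ih =>
        have heq2 : (((n:ℤ)+1 : ℤ):ℤ_[p]) * ν = (((n:ℤ)):ℤ_[p]) * ν + ν := by push_cast; ring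
        rw [heq2, padicPow_add hO, ih, one_mul, hν]
      | pred n ih =>
        have heq2 : ((-(n:ℤ)-1 : ℤ):ℤ_[p]) * ν = ((-(n:ℤ):ℤ):ℤ_[p]) * ν + (-ν) := by
          push_cast; ring
        rw [heq2, padicPow_add hO, ih, one_mul, padicPow_neg hO, hν, inv_one]
    have hclosed : IsClosed {z : ℤ_[p] | padicPow p h₀ z = 1} :=
      IsClosed.preimage (padicPow_continuous hO h₀) isClosed_singleton
    have hcl2 : (p:ℤ_[p])^j ∈ closure (Set.range (fun n:ℤ => (n:ℤ_[p])*ν)) := by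
      rw [Metric.mem_closure_iff]
      intro ε hε
      obtain ⟨n, hn⟩ := PadicInt.denseRange_intCast.exists_dist_lt
        (((PadicInt.unitCoeff hν0)⁻¹ : ℤ_[p]ˣ) : ℤ_[p]) hε
      refine ⟨(n:ℤ_[p])*ν, ⟨n, rfl⟩, ?_⟩
      have hinv : ((PadicInt.unitCoeff hν0 : ℤ_[p]ˣ) : ℤ_[p]) *
          (((PadicInt.unitCoeff hν0)⁻¹ : ℤ_[p]ˣ) : ℤ_[p]) = 1 := by
        rw [← Units.val_mul, mul_inv_cancel, Units.val_one]
      have heq : (p:ℤ_[p])^j - (n:ℤ_[p])*ν = (p:ℤ_[p])^j * (PadicInt.unitCoeff hν0 : ℤ_[p]) *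
          ((((PadicInt.unitCoeff hν0)⁻¹ : ℤ_[p]ˣ) : ℤ_[p]) - (n:ℤ_[p])) := by
        linear_combination (-(p:ℤ_[p])^j) * hinv - (n:ℤ_[p]) * hspec
      rw [dist_eq_norm, heq, norm_mul, norm_mul]
      calc ‖(p:ℤ_[p])^j‖ * ‖(PadicInt.unitCoeff hν0 : ℤ_[p])‖ *
            ‖(((PadicInt.unitCoeff hν0)⁻¹ : ℤ_[p]ˣ) : ℤ_[p]) - (n:ℤ_[p])‖
          ≤ 1 * 1 * ‖(((PadicInt.unitCoeff hν0)⁻¹ : ℤ_[p]ˣ) : ℤ_[p]) - (n:ℤ_[p])‖ := by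
            gcongr
            · exact PadicInt.norm_le_one _
            · exact le_of_eq (PadicInt.norm_units _)
        _ < ε := by rw [one_mul, one_mul, ← dist_eq_norm]; exact hn
    have hmem : padicPow p h₀ ((p:ℤ_[p])^j) = 1 := by
      have hsub : Set.range (fun n:ℤ => (n:ℤ_[p])*ν) ⊆ {z : ℤ_[p] | padicPow p h₀ z = 1} := by
        rintro _ ⟨n, rfl⟩
        exact hZν n
      exact (closure_minimal hsub hclosed) hcl2
    have hcast : ((((p^j:ℕ)):ℤ):ℤ_[p]) = (p:ℤ_[p])^j := by push_cast; ring
    have hfin : h₀ ^ (((p^j:ℕ)):ℤ) = 1 := by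
      rw [← padicPow_int hO h₀ (((p^j:ℕ)):ℤ), hcast]
      exact hmem
    apply htor j
    rwa [zpow_natCast] at hfin
  intro a b hab
  have : padicPow p h₀ (a + (-b)) = 1 := by
    rw [padicPow_add hO, padicPow_neg hO, hab, mul_inv_cancel]
  have h0 := hker _ this
  have : a - b = 0 := by rwa [sub_eq_add_neg]
  exact sub_eq_zero.mp this

end WithHO



variable {p : ℕ} [Fact p.Prime] {G : Type*} [Group G] [TopologicalSpace G] [IsTopologicalGroup G]

lemma t2_of_proP (hG : IsProPGroup p G) : T2Space G := by
  haveI := hG.2.1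
  apply IsTopologicalGroup.t2Space_iff_one_closed.mpr
  have h := (totallyDisconnectedSpace_iff_connectedComponent_singleton.mp hG.2.1) 1
  rw [← h]
  exact isClosed_connectedComponent

lemma hO_of_proP (hG : IsProPGroup p G) :
    ∀ N ∈ 𝓝 (1:G), ∃ U : Subgroup G,
      IsOpen (U:Set G) ∧ (U:Set G) ⊆ N ∧ ∃ k:ℕ, ∀ x:G, x^(p^k) ∈ U := by
  haveI := hG.1
  haveI := hG.2.1
  haveI := t2_of_proP hG
  intro N hN
  obtain ⟨s, ⟨h1s, hclopen⟩, hsub⟩ := (nhds_basis_clopen (1:G)).mem_iff.mp hN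
  obtain ⟨H, hH⟩ := IsTopologicalGroup.exist_openNormalSubgroup_sub_clopen_nhds_of_one hclopen h1s
  refine ⟨H.toSubgroup, H.isOpen, le_trans hH hsub, ?_⟩
  haveI := H.isNormal'
  obtain ⟨k, hk⟩ := hG.2.2 H.toSubgroup inferInstance H.isOpen
  refine ⟨k, fun x => ?_⟩
  rw [← hk]
  exact Subgroup.pow_index_mem H.toSubgroup x

lemma ktheta_eq_bot (hG : IsProPGroup p G) (θ : G →* ℤ_[p]ˣ)
    (h1 : IsThetaAbelian p θ) : Ktheta p θ = ⊥ := by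
  haveI := hG.1
  haveI := t2_of_proP hG
  have hO := hO_of_proP hG
  have hgen : {x : G | ∃ g h : G, h ∈ θ.ker ∧
      x = padicPow p h (-((θ g : ℤ_[p]ˣ) : ℤ_[p])) * (g * h * g⁻¹)} ⊆ ((⊥ : Subgroup G) : Set G) := by
    rintro x ⟨g, h, hker, rfl⟩
    have hc := h1.2.2 g h hker
    rw [hc, padicPow_neg hO, inv_mul_cancel]
    simp
  have hcl : Subgroup.closure {x : G | ∃ g h : G, h ∈ θ.ker ∧
      x = padicPow p h (-((θ g : ℤ_[p]ˣ) : ℤ_[p])) * (g * h * g⁻¹)} = ⊥ :=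
    eq_bot_iff.mpr ((Subgroup.closure_le ⊥).mpr hgen)
  show (Subgroup.closure _).topologicalClosure = ⊥
  rw [hcl]
  apply le_antisymm ?_ (Subgroup.le_topologicalClosure _)
  apply Subgroup.topologicalClosure_minimal _ le_rfl
  rw [Subgroup.coe_bot]
  exact isClosed_singleton

lemma three_imp_one (hG : IsProPGroup p G) (θ : G →* ℤ_[p]ˣ)
    (h3 : Ktheta p θ = ⊥ ∧ (∀ h₁ ∈ θ.ker, ∀ h₂ ∈ θ.ker, h₁ * h₂ = h₂ * h₁) ∧
      (∀ h ∈ θ.ker, ∀ n : ℕ, n ≠ 0 → h ^ n = 1 → h = 1)) : IsThetaAbelian p θ := by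
  haveI := hG.1
  haveI := t2_of_proP hG
  have hO := hO_of_proP hG
  refine ⟨h3.2.1, h3.2.2, ?_⟩
  intro g h hker
  have hx : padicPow p h (-((θ g : ℤ_[p]ˣ) : ℤ_[p])) * (g * h * g⁻¹) ∈ Ktheta p θ :=
    Subgroup.le_topologicalClosure _ (Subgroup.subset_closure ⟨g, h, hker, rfl⟩)
  rw [h3.1, Subgroup.mem_bot] at hx
  rw [padicPow_neg hO] at hx
  exact (inv_mul_eq_one.mp hx).symm

lemma one_imp_two (hG : IsProPGroup p G) (θ : G →* ℤ_[p]ˣ) (htf : OriTorsionFree p θ)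
    (h1 : IsThetaAbelian p θ) : IsSplitThetaAbelian p θ := by
  obtain ⟨hab, htor, hconj⟩ := h1
  haveI := hG.1
  haveI := t2_of_proP hG
  have hO := hO_of_proP hG
  refine ⟨⟨hab, htor, hconj⟩, ?_⟩
  by_cases hker : ∀ x ∈ θ.ker, x = (1:G)
  · refine ⟨⊤, isClosed_univ, ?_, ?_⟩
    · apply eq_bot_iff.mpr
      intro x hx
      have := hker x ((Subgroup.mem_inf.mp hx).2)
      simpa [Subgroup.mem_bot] using this
    · exact top_sup_eq _
  · push_neg at hker
    obtain ⟨h₀, hh₀k, hh₀ne⟩ := hker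
    have htor' : ∀ k:ℕ, h₀^(p^k) = 1 → h₀ = 1 := fun k hk =>
      htor h₀ hh₀k (p^k) (pow_ne_zero k (Fact.out : p.Prime).ne_zero) hk
    have hinj := padicPow_injective hO h₀ htor' hh₀ne
    set tmap : G → ℤ_[p] := fun g => ((θ g : ℤ_[p]ˣ) : ℤ_[p]) with htmap
    have hconj' : ∀ g : G, g * h₀ * g⁻¹ = padicPow p h₀ (tmap g) := fun g => hconj g h₀ hh₀k
    have htcont : Continuous tmap := by
      rw [continuous_iff_isClosed]
      intro S hS
      have hpre : tmap ⁻¹' S = (fun g => g * h₀ * g⁻¹) ⁻¹' (padicPow p h₀ '' S) := by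
        ext g
        simp only [Set.mem_preimage, Set.mem_image]
        constructor
        · intro hg
          exact ⟨tmap g, hg, (hconj' g).symm⟩
        · rintro ⟨s, hs, heqs⟩
          have hz : s = tmap g := hinj (by rw [heqs, hconj' g])
          rwa [← hz]
      rw [hpre]
      apply IsClosed.preimage
      · exact (continuous_id.mul continuous_const).mul continuous_inv
      · exact ((hS.isCompact).image (padicPow_continuous hO h₀)).isClosed
    have hb : ∀ g : G, (p:ℤ_[p]) ∣ (tmap g - 1) := by
      intro g
      set φ : G →* (ZMod p)ˣ := (Units.map (PadicInt.toZMod (p := p)).toMonoidHom).comp θ with hφ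
      have hkermem : ∀ g' : G, g' ∈ φ.ker ↔ (p:ℤ_[p]) ∣ (tmap g' - 1) := by
        intro g'
        rw [MonoidHom.mem_ker]
        constructor
        · intro hgk
          have hval : PadicInt.toZMod (tmap g') = 1 := by
            have := congrArg Units.val hgk
            simpa [hφ] using this
          have h0 : tmap g' - 1 ∈ RingHom.ker (PadicInt.toZMod (p := p)) := by
            show PadicInt.toZMod (tmap g' - 1) = 0
            rw [map_sub, hval, map_one, sub_self]
          rw [PadicInt.ker_toZMod, PadicInt.maximalIdeal_eq_span_p,
            Ideal.mem_span_singleton] at h0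
          exact h0
        · intro hdvd
          apply Units.ext
          show PadicInt.toZMod (tmap g') = 1
          have h0 : tmap g' - 1 ∈ RingHom.ker (PadicInt.toZMod (p := p)) := by
            rw [PadicInt.ker_toZMod, PadicInt.maximalIdeal_eq_span_p,
              Ideal.mem_span_singleton]
            exact hdvd
          have : PadicInt.toZMod (tmap g' - 1) = 0 := h0
          rw [map_sub, map_one, sub_eq_zero] at this
          exact this
      have hopen : IsOpen (φ.ker : Set G) := by
        have hset : (φ.ker : Set G) = tmap ⁻¹' (Metric.ball (1:ℤ_[p]) 1) := by
          ext g'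
          rw [SetLike.mem_coe, hkermem, Set.mem_preimage, Metric.mem_ball, dist_eq_norm,
            ← PadicInt.norm_lt_one_iff_dvd]
        rw [hset]
        exact Metric.isOpen_ball.preimage htcont
      obtain ⟨k, hk⟩ := hG.2.2 φ.ker inferInstance hopen
      haveI : NeZero p := ⟨(Fact.out : p.Prime).ne_zero⟩
      have hcard : φ.ker.index ∣ p - 1 := by
        rw [Subgroup.index_ker]
        have h1 := Subgroup.card_subgroup_dvd_card φ.range
        have h2 : Nat.card (ZMod p)ˣ = p - 1 := by
          rw [Nat.card_eq_fintype_card, ZMod.card_units]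
        rwa [h2] at h1
      have hk0 : k = 0 := by
        by_contra hk0
        have hdp : p ∣ p - 1 := (dvd_pow_self p hk0).trans (hk ▸ hcard)
        have h2 := (Fact.out : p.Prime).two_le
        have := Nat.le_of_dvd (by omega) hdp
        omega
      have hkertop : φ.ker = ⊤ := Subgroup.index_eq_one.mp (by rw [hk, hk0, pow_zero])
      exact (hkermem g).mp (by rw [hkertop]; trivial)
    have himg : ∀ g : G, (p:ℤ_[p])^(if p = 2 then 2 else 1) ∣ (tmap g - 1) := by
      by_cases hp2 : p = 2
      · subst hp2
        rcases htf with h | h4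
        · exact absurd rfl h
        · intro g
          obtain ⟨y, hy⟩ := h4 g
          refine ⟨y, ?_⟩
          show ((θ g : ℤ_[2]ˣ) : ℤ_[2]) - 1 = ((2:ℕ):ℤ_[2])^(if (2:ℕ) = 2 then 2 else 1) * y
          rw [hy, if_pos rfl]
          push_cast
          ring
      · simp only [if_neg hp2, pow_one]
        exact hb
    set e := (if p = 2 then 2 else 1) with he
    have he1 : 1 ≤ e := by by_cases hp2 : p = 2 <;> simp [he, hp2]
    have he2 : p = 2 → 2 ≤ e := fun h => by simp [he, h]
    by_cases htriv : ∀ g : G, tmap g = 1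
    · refine ⟨⊥, ?_, bot_inf_eq _, ?_⟩
      · rw [Subgroup.coe_bot]
        exact isClosed_singleton
      · have hkt : θ.ker = ⊤ := by
          apply (Subgroup.eq_top_iff' θ.ker).mpr
          intro g
          rw [MonoidHom.mem_ker]
          exact Units.ext (htriv g)
        rw [hkt]
        exact sup_top_eq _
    · push_neg at htriv
      obtain ⟨gx, hgx⟩ := htriv
      set D := {k : ℕ | ∃ g : G, ¬ (p:ℤ_[p])^(k+1) ∣ (tmap g - 1)} with hD
      have hDne : D.Nonempty := by
        obtain ⟨k, hk⟩ := exists_not_pow_dvd (tmap gx - 1) (sub_ne_zero.mpr hgx)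
        exact ⟨k, gx, hk⟩
      set v := sInf D with hv
      obtain ⟨g₀, hg₀⟩ : ∃ g : G, ¬ (p:ℤ_[p])^(v+1) ∣ (tmap g - 1) := Nat.sInf_mem hDne
      have hvmin : ∀ g : G, (p:ℤ_[p])^v ∣ (tmap g - 1) := by
        intro g
        rcases Nat.eq_zero_or_pos v with h0 | hpos
        · rw [h0, pow_zero]; exact one_dvd _
        · by_contra hcon
          have hmem : v - 1 ∈ D := ⟨g, by
            have hveq : v - 1 + 1 = v := by omega
            rw [hveq]; exact hcon⟩
          have := Nat.sInf_le hmem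
          omega
      have hve : e ≤ v := by
        by_contra hcon
        apply hg₀
        have h1 : v + 1 ≤ e := by omega
        exact (pow_dvd_pow (p:ℤ_[p]) h1).trans (himg g₀)
      have hv1 : 1 ≤ v := le_trans he1 hve
      have hv2 : p = 2 → 2 ≤ v := fun h => le_trans (he2 h) hve
      obtain ⟨u, hu⟩ := hvmin g₀
      have hx0 : tmap g₀ = 1 + (p:ℤ_[p])^v * u := by linear_combination hu
      have huu : IsUnit u := by
        rw [isUnit_iff_not_dvd]
        rintro ⟨c, rfl⟩
        exact hg₀ ⟨c, by rw [hu, pow_succ]; ring⟩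
      set C : Subgroup G := {
        carrier := Set.range (padicPow p g₀)
        one_mem' := ⟨0, padicPow_zero hO g₀⟩
        mul_mem' := by
          rintro a b ⟨x, rfl⟩ ⟨y, rfl⟩
          exact ⟨x+y, padicPow_add hO g₀ x y⟩
        inv_mem' := by
          rintro a ⟨x, rfl⟩
          exact ⟨-x, padicPow_neg hO g₀ x⟩ } with hCdef
      have hCclosed : IsClosed (C : Set G) :=
        (isCompact_range (padicPow_continuous hO g₀)).isClosed
      refine ⟨C, hCclosed, ?_, ?_⟩
      · apply eq_bot_iff.mpr
        rintro x hx
        obtain ⟨hxC, hxk⟩ := Subgroup.mem_inf.mp hx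
        obtain ⟨μ, rfl⟩ := hxC
        rw [Subgroup.mem_bot]
        suffices hμ : μ = 0 by rw [hμ]; exact padicPow_zero hO g₀
        by_contra hμ0
        set j := (μ.valuation) with hjdef
        have hspec : μ = (PadicInt.unitCoeff hμ0 : ℤ_[p]) * (p:ℤ_[p])^j :=
          PadicInt.unitCoeff_spec hμ0
        have hμnorm : ‖μ‖ = (p:ℝ)^(-(j:ℤ)) := by
          have h' := congrArg (fun z : ℤ_[p] => ‖z‖) hspec
          rw [h', norm_mul, PadicInt.norm_units, one_mul, PadicInt.norm_p_pow]
        have htmx : tmap (padicPow p g₀ μ) = 1 := by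
          have hmk : θ (padicPow p g₀ μ) = 1 := hxk
          rw [htmap]
          simp only [hmk, Units.val_one]
        have hT : Filter.Tendsto (fun n:ℤ => tmap (g₀^n)) (Ffil p μ) (𝓝 (1:ℤ_[p])) := by
          have hcomp := (htcont.tendsto _).comp (tendsto_padicPow hO g₀ μ)
          rwa [htmx] at hcomp
        have hplt : (1:ℝ) < p := by exact_mod_cast (Fact.out : p.Prime).one_lt
        have hEv : ∀ᶠ n in Ffil p μ, ‖tmap (g₀^n) - 1‖ = (p:ℝ)^(-((v+j:ℕ)):ℤ) := by
          filter_upwards [Sk_mem μ (j+1)] with n hn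
          have hnn : ‖(n:ℤ_[p])‖ = (p:ℝ)^(-(j:ℤ)) := by
            have hlt : ‖(n:ℤ_[p]) - μ‖ < ‖μ‖ := by
              rw [hμnorm]
              refine lt_of_le_of_lt hn ?_
              apply zpow_lt_zpow_right₀ hplt
              omega
            have hne : ‖μ‖ ≠ ‖(n:ℤ_[p]) - μ‖ := ne_of_gt hlt
            have h1 : (n:ℤ_[p]) = μ + ((n:ℤ_[p]) - μ) := by ring
            rw [h1, PadicInt.norm_add_eq_max_of_ne hne, max_eq_left (le_of_lt hlt), hμnorm]
          have hj1 : (p:ℤ)^j ∣ n := by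
            have h0 : ‖(n:ℤ_[p]) - ((0:ℤ):ℤ_[p])‖ ≤ (p:ℝ)^(-(j:ℤ)) := by
              simpa using le_of_eq hnn
            have := int_dvd_of_norm_le h0
            simpa using this
          have hj2 : ¬ (p:ℤ)^(j+1) ∣ n := by
            intro hcon
            have hle : ‖(n:ℤ_[p])‖ ≤ (p:ℝ)^(-((j+1:ℕ)):ℤ) := by
              have hcast : ((n:ℤ):ℤ_[p]) = (n:ℤ_[p]) := rfl
              have := PadicInt.norm_int_le_pow_iff_dvd (k := n) (n := j+1) |>.mpr (by
                exact_mod_cast hcon)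
              exact this
            rw [hnn] at hle
            have hlt : (p:ℝ)^(-((j+1:ℕ)):ℤ) < (p:ℝ)^(-(j:ℤ)) := by
              apply zpow_lt_zpow_right₀ hplt
              omega
            have := lt_of_le_of_lt hle hlt
            exact lt_irrefl _ this
          have heqz : tmap (g₀^n) = ((θ g₀ ^ n : ℤ_[p]ˣ) : ℤ_[p]) := by
            rw [htmap]
            simp only [map_zpow]
          rw [heqz]
          exact norm_zpow_sub_one (θ g₀) v hv1 hv2 u huu hx0 n j hj1 hj2
        haveI := Ffil_neBot (p := p) μ
        have hlim : Filter.Tendsto (fun n:ℤ => ‖tmap (g₀^n) - 1‖) (Ffil p μ) (𝓝 0) := by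
          have h2 := (hT.sub (tendsto_const_nhds (x := (1:ℤ_[p])))).norm
          rwa [sub_self, norm_zero] at h2
        have hsmall : ∀ᶠ n in Ffil p μ, ‖tmap (g₀^n) - 1‖ < (p:ℝ)^(-((v+j:ℕ)):ℤ) :=
          hlim.eventually (gt_mem_nhds (by positivity))
        obtain ⟨n, hn1, hn2⟩ := (hEv.and hsmall).exists
        rw [hn1] at hn2
        exact lt_irrefl _ hn2
      · apply eq_top_iff.mpr
        intro g _
        have hyv : (p:ℤ_[p])^v ∣ (tmap g - 1) := hvmin g
        have hclosedim : IsClosed (tmap '' (C : Set G)) :=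
          ((isCompact_range (padicPow_continuous hO g₀)).image htcont).isClosed
        have hplt : (1:ℝ) < p := by exact_mod_cast (Fact.out : p.Prime).one_lt
        have hmem : tmap g ∈ tmap '' (C : Set G) := by
          have hcl : tmap g ∈ closure (tmap '' (C : Set G)) := by
            rw [Metric.mem_closure_iff]
            intro ε hε
            obtain ⟨k, hk⟩ := exists_pow_lt_of_lt_one hε
              (by rw [inv_lt_one_iff₀]; right; exact hplt : (p:ℝ)⁻¹ < 1)
            obtain ⟨n, hn⟩ := density v hv1 hv2 u huu (tmap g) hyv k
            refine ⟨tmap (g₀^(n:ℕ)), ⟨g₀^(n:ℕ), ?_, rfl⟩, ?_⟩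
            · refine ⟨(((n:ℕ):ℤ):ℤ_[p]), ?_⟩
              rw [padicPow_int hO g₀ ((n:ℕ):ℤ), zpow_natCast]
            · have htpow : tmap (g₀^(n:ℕ)) = (tmap g₀)^(n:ℕ) := by
                rw [htmap]
                simp only [map_pow, Units.val_pow_eq_pow_val]
              rw [dist_eq_norm, htpow, hx0]
              have hnorm := (pow_dvd_iff_norm_le _ (v+k)).mp hn
              have hle2 : ((p:ℝ))^(-((v+k:ℕ)):ℤ) ≤ ((p:ℝ)⁻¹)^k := by
                have heq2 : ((p:ℝ)⁻¹)^k = (p:ℝ)^(-(k:ℤ)) := by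
                  rw [inv_pow, ← zpow_natCast, ← zpow_neg]
                rw [heq2]
                exact zpow_le_zpow_right₀ (le_of_lt hplt) (by omega)
              exact lt_of_le_of_lt (hnorm.trans hle2) hk
          rwa [hclosedim.closure_eq] at hcl
        obtain ⟨c, hcC, hcg⟩ := hmem
        have hθcg : θ c = θ g := Units.ext hcg
        have hgdec : g = c * (c⁻¹ * g) := by group
        rw [hgdec]
        refine Subgroup.mul_mem _ (Subgroup.mem_sup_left hcC) (Subgroup.mem_sup_right ?_)
        rw [MonoidHom.mem_ker, map_mul, map_inv, hθcg, inv_mul_cancel]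


end Stmt3Aux

attribute [local instance] Subgroup.is_normal_topologicalClosure
/-- For a torsion-free oriented pro-`p` group `(G,θ)` the following are
equivalent: (i) `(G,θ)` is `θ`-abelian; (ii) `(G,θ)` is split `θ`-abelian; (iii)
`K_θ(G) = 1` and `ker θ` is a free abelian (= torsion-free abelian) pro-`p` group. -/
theorem stmt3 (p : ℕ) [Fact p.Prime] (G : Type) [Group G] [TopologicalSpace G]
    [IsTopologicalGroup G] (hG : IsProPGroup p G) (θ : G →* ℤ_[p]ˣ)
    (htf : OriTorsionFree p θ) :
    List.TFAE [IsThetaAbelian p θ,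
      IsSplitThetaAbelian p θ,
      Ktheta p θ = ⊥ ∧ (∀ h₁ ∈ θ.ker, ∀ h₂ ∈ θ.ker, h₁ * h₂ = h₂ * h₁) ∧
        (∀ h ∈ θ.ker, ∀ n : ℕ, n ≠ 0 → h ^ n = 1 → h = 1)] := by
  tfae_have 1 → 2 := fun h1 => Stmt3Aux.one_imp_two hG θ htf h1
  tfae_have 2 → 1 := fun h2 => h2.1
  tfae_have 1 → 3 := fun h1 => ⟨Stmt3Aux.ktheta_eq_bot hG θ h1, h1.1, h1.2.1⟩
  tfae_have 3 → 1 := fun h3 => Stmt3Aux.three_imp_one hG θ h3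
  tfae_finish
end

section
/- Let (G,θ) be an oriented pro-ℓ group and A a free abelian pro-ℓ group, and form the semidirect product A ⋊ G where g a g^{-1} = a^{θ(g)}, with orientation θ∘π (π the projection to G). Then K_{θ∘π}(A ⋊ G) = K_θ(G); consequently A ⋊ (G,θ) is Kummerian iff (G,θ) is, and has the Bogomolov property iff (G,θ) does. -/
open scoped Topology

section AuxPadic

open Filter

variable (p : ℕ) [Fact p.Prime]

/-- The filter of integers tending `p`-adically to `lam`. -/
noncomputable def pFil (lam : ℤ_[p]) : Filter ℤ :=
  Filter.comap (fun n : ℤ => (n : ℤ_[p])) (𝓝 lam)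

lemma padicPow_def {G : Type*} [Group G] [TopologicalSpace G] (h : G) (lam : ℤ_[p]) :
    padicPow p h lam = @limUnder G _ ℤ ⟨1⟩ (pFil p lam) (fun n : ℤ => h ^ n) := rfl

instance pFil_neBot (lam : ℤ_[p]) : (pFil p lam).NeBot :=
  Filter.comap_neBot fun t ht => PadicInt.denseRange_intCast.mem_nhds ht

variable {G : Type*} [Group G] [TopologicalSpace G] [IsTopologicalGroup G]

lemma aux_t2 [TotallyDisconnectedSpace G] : T2Space G :=
  IsTopologicalGroup.t2Space_iff_one_closed.mpr isClosed_singleton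

lemma padicPow_eq_of_tendsto [T2Space G] {h : G} {lam : ℤ_[p]} {x : G}
    (ht : Filter.Tendsto (fun n : ℤ => h ^ n) (pFil p lam) (𝓝 x)) :
    padicPow p h lam = x := by
  rw [padicPow_def]
  exact ht.limUnder_eq

variable (hidx : ∀ U : Subgroup G, U.Normal → IsOpen (U : Set G) → ∃ k : ℕ, U.index = p ^ k)
include hidx

lemma aux_coset (h : G) (H : Subgroup G) (hN : H.Normal) (hO : IsOpen (H : Set G)) :
    ∃ k : ℕ, ∀ n m : ℤ, ‖(n : ℤ_[p]) - (m : ℤ_[p])‖ ≤ (p : ℝ) ^ (-(k : ℤ)) →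
      h ^ n * (h ^ m)⁻¹ ∈ H := by
  obtain ⟨k, hk⟩ := hidx H hN hO
  refine ⟨k, fun n m hnm => ?_⟩
  have hdvd : ((p : ℤ) ^ k) ∣ (n - m) := by
    rw [← PadicInt.norm_int_le_pow_iff_dvd]
    have : ((n - m : ℤ) : ℤ_[p]) = (n : ℤ_[p]) - (m : ℤ_[p]) := by push_cast; ring
    rw [this]; exact hnm
  obtain ⟨t, ht⟩ := hdvd
  have hH : h ^ ((p : ℤ) ^ k) ∈ H := by
    have h1 := Subgroup.pow_index_mem H h
    rw [hk] at h1
    have : h ^ ((p : ℤ) ^ k) = h ^ (p ^ k : ℕ) := by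
      rw [← zpow_natCast]; norm_cast
    rw [this]; exact h1
  have heq : h ^ n * (h ^ m)⁻¹ = (h ^ ((p : ℤ) ^ k)) ^ t := by
    rw [← zpow_mul, ← ht, zpow_sub]
  rw [heq]
  exact Subgroup.zpow_mem H hH t

variable [CompactSpace G] [TotallyDisconnectedSpace G]

omit hidx in
lemma aux_tendsto_of_coset {h : G} {lam : ℤ_[p]} {L : G}
    (hyp : ∀ H : Subgroup G, H.Normal → IsOpen (H : Set G) →
      ∀ᶠ n in pFil p lam, h ^ n * L⁻¹ ∈ H) :
    Filter.Tendsto (fun n : ℤ => h ^ n) (pFil p lam) (𝓝 L) := by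
  haveI : T2Space G := aux_t2
  intro U hU
  obtain ⟨V, hVU, hVopen, hLV⟩ := mem_nhds_iff.mp hU
  have hWopen : IsOpen ((fun x => x * L) ⁻¹' V) := hVopen.preimage (continuous_mul_right L)
  have h1W : (1 : G) ∈ (fun x => x * L) ⁻¹' V := by simpa using hLV
  obtain ⟨Cc, hCc, h1C, hCW⟩ := compact_exists_isClopen_in_isOpen hWopen h1W
  obtain ⟨H, hH⟩ := IsTopologicalGroup.exist_openNormalSubgroup_sub_clopen_nhds_of_one hCc h1C
  have := hyp H.toSubgroup inferInstance H.isOpen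
  rw [Filter.mem_map]
  filter_upwards [this] with n hn
  have : h ^ n * L⁻¹ ∈ (fun x => x * L) ⁻¹' V := hCW (hH hn)
  simpa using hVU this

lemma aux_exists_tendsto (h : G) (lam : ℤ_[p]) :
    ∃ L, Filter.Tendsto (fun n : ℤ => h ^ n) (pFil p lam) (𝓝 L) := by
  obtain ⟨L, hL⟩ := exists_clusterPt_of_compactSpace
    (Filter.map (fun n : ℤ => h ^ n) (pFil p lam))
  refine ⟨L, aux_tendsto_of_coset p ?_⟩
  intro H hN hO
  obtain ⟨k, hk⟩ := aux_coset p hidx h H hN hO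
  set E : Set ℤ := (fun n : ℤ => (n : ℤ_[p])) ⁻¹' (Metric.closedBall lam ((p : ℝ) ^ (-(k : ℤ))))
    with hE_def
  have hppos : (0 : ℝ) < (p : ℝ) ^ (-(k : ℤ)) := by
    have : (0 : ℝ) < (p : ℝ) := by exact_mod_cast (Fact.out : p.Prime).pos
    positivity
  have hE : E ∈ pFil p lam :=
    Filter.preimage_mem_comap (Metric.closedBall_mem_nhds _ hppos)
  have hball : ∀ n ∈ E, ∀ m ∈ E, ‖(n : ℤ_[p]) - (m : ℤ_[p])‖ ≤ (p : ℝ) ^ (-(k : ℤ)) := by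
    intro n hn m hm
    have h1 : ‖(n : ℤ_[p]) - lam‖ ≤ (p : ℝ) ^ (-(k : ℤ)) := by
      have := hn; rw [hE_def, Set.mem_preimage, Metric.mem_closedBall, dist_eq_norm] at this
      exact this
    have h2 : ‖lam - (m : ℤ_[p])‖ ≤ (p : ℝ) ^ (-(k : ℤ)) := by
      have := hm; rw [hE_def, Set.mem_preimage, Metric.mem_closedBall, dist_eq_norm] at this
      rw [norm_sub_rev]; exact this
    calc ‖(n : ℤ_[p]) - (m : ℤ_[p])‖ = ‖((n : ℤ_[p]) - lam) + (lam - (m : ℤ_[p]))‖ := by ring_nf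
      _ ≤ max ‖(n : ℤ_[p]) - lam‖ ‖lam - (m : ℤ_[p])‖ := PadicInt.nonarchimedean _ _
      _ ≤ (p : ℝ) ^ (-(k : ℤ)) := max_le h1 h2
  obtain ⟨n₀, hn₀⟩ := Filter.nonempty_of_mem hE
  have hev : ∀ᶠ n in pFil p lam, h ^ n * (h ^ n₀)⁻¹ ∈ H := by
    filter_upwards [hE] with n hn
    exact hk n n₀ (hball n hn n₀ hn₀)
  haveI : T2Space G := aux_t2
  have hDcl : IsClosed {x : G | x * (h ^ n₀)⁻¹ ∈ H} :=
    (Subgroup.isClosed_of_isOpen H hO).preimage (continuous_mul_right _)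
  have hLD : L * (h ^ n₀)⁻¹ ∈ H := by
    have hclos : L ∈ closure {x : G | x * (h ^ n₀)⁻¹ ∈ H} := by
      rw [mem_closure_iff_clusterPt]
      exact hL.mono (Filter.le_principal_iff.mpr (Filter.mem_map.mpr hev))
    rwa [hDcl.closure_eq] at hclos
  filter_upwards [hev] with n hn
  have := H.mul_mem hn (H.inv_mem hLD)
  have heq : h ^ n * (h ^ n₀)⁻¹ * (L * (h ^ n₀)⁻¹)⁻¹ = h ^ n * L⁻¹ := by group
  rwa [heq] at this

lemma padicPow_tendsto (h : G) (lam : ℤ_[p]) :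
    Filter.Tendsto (fun n : ℤ => h ^ n) (pFil p lam) (𝓝 (padicPow p h lam)) := by
  rw [padicPow_def]
  exact tendsto_nhds_limUnder (aux_exists_tendsto p hidx h lam)

lemma padicPow_intCast (h : G) (n : ℤ) : padicPow p h ((n : ℤ) : ℤ_[p]) = h ^ n := by
  haveI : T2Space G := aux_t2
  refine padicPow_eq_of_tendsto p (aux_tendsto_of_coset p ?_)
  intro H hN hO
  obtain ⟨k, hk⟩ := aux_coset p hidx h H hN hO
  have hppos : (0 : ℝ) < (p : ℝ) ^ (-(k : ℤ)) := by
    have : (0 : ℝ) < (p : ℝ) := by exact_mod_cast (Fact.out : p.Prime).pos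
    positivity
  have hE : (fun m : ℤ => (m : ℤ_[p])) ⁻¹'
      (Metric.closedBall ((n : ℤ) : ℤ_[p]) ((p : ℝ) ^ (-(k : ℤ)))) ∈ pFil p ((n : ℤ) : ℤ_[p]) :=
    Filter.preimage_mem_comap (Metric.closedBall_mem_nhds _ hppos)
  filter_upwards [hE] with m hm
  rw [Set.mem_preimage, Metric.mem_closedBall, dist_eq_norm] at hm
  exact hk m n hm

lemma padicPow_one_eq (h : G) : padicPow p h (1 : ℤ_[p]) = h := by
  have := padicPow_intCast p hidx h 1
  simpa using this

lemma padicPow_mul_of_commute {a b : G} (hab : a * b = b * a) (lam : ℤ_[p]) :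
    padicPow p (a * b) lam = padicPow p a lam * padicPow p b lam := by
  haveI : T2Space G := aux_t2
  refine padicPow_eq_of_tendsto p ?_
  have := (padicPow_tendsto p hidx a lam).mul (padicPow_tendsto p hidx b lam)
  have heq : (fun n : ℤ => a ^ n * b ^ n) = fun n : ℤ => (a * b) ^ n := by
    funext n
    exact ((Commute.mul_zpow hab n)).symm
  rwa [heq] at this

lemma aux_tendsto_neg (h : G) (lam : ℤ_[p]) :
    Filter.Tendsto (fun n : ℤ => h ^ (-n)) (pFil p lam) (𝓝 (padicPow p h (-lam))) := by
  refine (padicPow_tendsto p hidx h (-lam)).comp ?_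
  rw [pFil, pFil, Filter.tendsto_comap_iff]
  have : ((fun n : ℤ => (n : ℤ_[p])) ∘ fun n : ℤ => -n) = fun n : ℤ => -((n : ℤ_[p])) := by
    funext n; simp
  rw [this]
  exact (continuous_neg.tendsto lam).comp Filter.tendsto_comap

lemma padicPow_neg_mul (h : G) (lam : ℤ_[p]) :
    padicPow p h (-lam) * padicPow p h lam = 1 := by
  haveI : T2Space G := aux_t2
  have h2 := (aux_tendsto_neg p hidx h lam).mul (padicPow_tendsto p hidx h lam)
  have h3 : (fun n : ℤ => h ^ (-n) * h ^ n) = fun _ : ℤ => (1 : G) := by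
    funext n; group
  rw [h3] at h2
  exact (tendsto_nhds_unique h2 tendsto_const_nhds)

lemma padicPow_mem_of_isClosed {K : Subgroup G} (hK : IsClosed (K : Set G)) {h : G}
    (hh : h ∈ K) (lam : ℤ_[p]) : padicPow p h lam ∈ K :=
  hK.mem_of_tendsto (padicPow_tendsto p hidx h lam)
    (Filter.Eventually.of_forall fun n => K.zpow_mem hh n)

lemma commute_padicPow {x h : G} (hx : x * h = h * x) (lam : ℤ_[p]) :
    x * padicPow p h lam = padicPow p h lam * x := by
  haveI : T2Space G := aux_t2
  have hcl : IsClosed {y : G | x * y = y * x} :=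
    isClosed_eq (continuous_const.mul continuous_id) (continuous_id.mul continuous_const)
  exact hcl.mem_of_tendsto (padicPow_tendsto p hidx h lam)
    (Filter.Eventually.of_forall fun n => ((Commute.zpow_right hx n)).eq)

lemma padicPow_subtype {C : Subgroup G} (hC : IsClosed (C : Set G)) (c : C) (lam : ℤ_[p]) :
    Subtype.val (padicPow p c lam) = padicPow p (c : G) lam := by
  haveI : T2Space G := aux_t2
  haveI : CompactSpace C := isCompact_iff_compactSpace.mp (hC.isCompact)
  have hmem : padicPow p (c : G) lam ∈ C :=
    padicPow_mem_of_isClosed p hidx hC c.2 lam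
  have ht : Filter.Tendsto (fun n : ℤ => c ^ n) (pFil p lam)
      (𝓝 (⟨padicPow p (c : G) lam, hmem⟩ : C)) := by
    rw [Topology.IsEmbedding.subtypeVal.tendsto_nhds_iff]
    have : (Subtype.val ∘ fun n : ℤ => c ^ n) = fun n : ℤ => (c : G) ^ n := by
      funext n; simp
    rw [this]
    exact padicPow_tendsto p hidx (c : G) lam
  rw [padicPow_eq_of_tendsto p ht]

end AuxPadic


section Transport

lemma isFreeProP_of_mulEquiv (p : ℕ) {G H : Type} [Group G] [TopologicalSpace G]
    [Group H] [TopologicalSpace H] (e : G ≃* H) (he : Continuous ⇑e)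
    (he' : Continuous ⇑e.symm) (hfree : IsFreeProP p G) : IsFreeProP p H := by
  obtain ⟨⟨hc, htd, hidx⟩, hlift⟩ := hfree
  refine ⟨⟨?_, ?_, ?_⟩, ?_⟩
  · refine ⟨?_⟩
    have h1 : IsCompact (⇑e '' Set.univ) := (@isCompact_univ G _ hc).image he
    rwa [Set.image_univ, e.surjective.range_eq] at h1
  · refine ⟨fun t _ ht => ?_⟩
    have h1 : IsPreconnected (⇑e.symm '' t) := ht.image _ he'.continuousOn
    have h2 : (⇑e.symm '' t).Subsingleton := htd.1 _ (Set.subset_univ _) h1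
    have h3 : t = ⇑e '' (⇑e.symm '' t) := by
      rw [Set.image_image]; simp
    rw [h3]; exact h2.image _
  · intro U hN hO
    obtain ⟨k, hk⟩ := hidx (U.comap e.toMonoidHom) (hN.comap e.toMonoidHom) (hO.preimage he)
    rw [Subgroup.index_comap_of_surjective U e.surjective] at hk
    exact ⟨k, hk⟩
  · intro A B _ _ fA fB hpA hpB f hf φ hφ
    obtain ⟨ψ, hψc, hψe⟩ := hlift A B fA fB hpA hpB f hf (φ.comp e.toMonoidHom)
      (by exact @Continuous.comp G H B _ _ ⊥ _ _ hφ he)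
    refine ⟨ψ.comp e.symm.toMonoidHom, by exact @Continuous.comp H G A _ _ ⊥ _ _ hψc he', ?_⟩
    ext x
    have := DFunLike.congr_fun hψe (e.symm x)
    simpa using this

end Transport


attribute [local instance] Subgroup.is_normal_topologicalClosure
/-- Let `(Ghat, th)` be an oriented pro-`p` group which is an (internal)
semidirect product `Ghat = A ⋊ G` of a free abelian closed normal subgroup `A ≤ ker th`,
on which `Ghat` acts by `g a g⁻¹ = a^{th(g)}`, with a closed complement `G = C`. Then
`K_{th}(Ghat) = K_{th|_C}(C)`; consequently `(Ghat,th)` is Kummerian iff `(C,th|_C)` is, and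
`(Ghat,th)` has the Bogomolov property iff `(C,th|_C)` does. -/
theorem stmt13 (p : ℕ) [Fact p.Prime] (Ghat : Type) [Group Ghat] [TopologicalSpace Ghat]
    [IsTopologicalGroup Ghat] (hG : IsProPGroup p Ghat) (th : Ghat →* ℤ_[p]ˣ)
    (A C : Subgroup Ghat) (hAnormal : A.Normal)
    (hAclosed : IsClosed (A : Set Ghat)) (hCclosed : IsClosed (C : Set Ghat))
    (hAab : ∀ a ∈ A, ∀ b ∈ A, a * b = b * a)
    (hAtf : ∀ a ∈ A, ∀ n : ℕ, n ≠ 0 → a ^ n = 1 → a = 1)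
    (hAker : A ≤ th.ker)
    (hact : ∀ g : Ghat, ∀ a ∈ A, g * a * g⁻¹ = padicPow p a ((th g : ℤ_[p]ˣ) : ℤ_[p]))
    (hinf : A ⊓ C = ⊥) (hsup : A ⊔ C = ⊤) :
    Ktheta p th = (Ktheta p (th.comp C.subtype)).map C.subtype ∧
    (IsKummerian p th ↔ IsKummerian p (th.comp C.subtype)) ∧
    ((IsKummerian p th ∧ IsFreeProP p (Ktheta p th)) ↔
      (IsKummerian p (th.comp C.subtype) ∧
        IsFreeProP p (Ktheta p (th.comp C.subtype)))) := by
  obtain ⟨hcpt, htd, hidx⟩ := hG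
  haveI := hcpt; haveI := htd
  haveI : T2Space Ghat := aux_t2
  haveI : CompactSpace C := isCompact_iff_compactSpace.mp (hCclosed.isCompact)
  set thC := th.comp C.subtype with hthC_def
  have hdecomp : ∀ x : Ghat, ∃ a ∈ A, ∃ c ∈ C, a * c = x := by
    intro x
    have hx : x ∈ (A ⊔ C : Subgroup Ghat) := hsup ▸ Subgroup.mem_top x
    have hms := Subgroup.normal_mul A C
    rw [← SetLike.mem_coe, hms] at hx
    exact Set.mem_mul.mp hx
  have hth_one : ∀ a ∈ A, th a = 1 := fun a ha => hAker ha
  have hker_comm : ∀ c : Ghat, th c = 1 → ∀ a ∈ A, c * a = a * c := by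
    intro c hc a ha
    have h1 := hact c a ha
    rw [hc, Units.val_one, padicPow_one_eq p hidx] at h1
    calc c * a = (c * a * c⁻¹) * c := by group
      _ = a * c := by rw [h1]
  -- generator sets
  set S : Set Ghat := {x : Ghat | ∃ g h : Ghat, h ∈ th.ker ∧
      x = padicPow p h (-((th g : ℤ_[p]ˣ) : ℤ_[p])) * (g * h * g⁻¹)} with hS_def
  set SC : Set ↥C := {x : ↥C | ∃ g h : ↥C, h ∈ thC.ker ∧
      x = padicPow p h (-((thC g : ℤ_[p]ˣ) : ℤ_[p])) * (g * h * g⁻¹)} with hSC_def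
  have hKdef : Ktheta p th = (Subgroup.closure S).topologicalClosure := rfl
  have hKCdef : Ktheta p thC = (Subgroup.closure SC).topologicalClosure := rfl
  -- image of SC generators
  have hCtoG : ∀ x : ↥C, x ∈ SC → (x : Ghat) ∈ S := by
    rintro x ⟨g, h, hker, rfl⟩
    refine ⟨(g : Ghat), (h : Ghat), ?_, ?_⟩
    · exact hker
    · push_cast
      rw [padicPow_subtype p hidx hCclosed]
      rfl
  -- generators of S are in the image of Ktheta thC
  have hGtoC : ∀ x ∈ S, x ∈ Subgroup.map C.subtype (Ktheta p thC) := by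
    rintro x ⟨g, h, hker, rfl⟩
    obtain ⟨a, ha, c, hc, hac⟩ := hdecomp h
    obtain ⟨b, hb, d, hd, hbd⟩ := hdecomp g
    have hthh : th h = 1 := hker
    have hthc : th c = 1 := by
      rw [← hac, map_mul, hth_one a ha, one_mul] at hthh; exact hthh
    have hca : c * a = a * c := hker_comm c hthc a ha
    have hthg : th g = th d := by rw [← hbd, map_mul, hth_one b hb, one_mul]
    have hdcd : th (d * c * d⁻¹) = 1 := by
      rw [map_mul, map_mul, hthc, map_inv]; group
    have hgcg : g * c * g⁻¹ = d * c * d⁻¹ := by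
      rw [← hbd]
      have h2 : b * (d * c * d⁻¹) = (d * c * d⁻¹) * b := (hker_comm _ hdcd b hb).symm
      calc b * d * c * (b * d)⁻¹ = b * (d * c * d⁻¹) * b⁻¹ := by group
        _ = (d * c * d⁻¹) * b * b⁻¹ := by rw [h2]
        _ = d * c * d⁻¹ := by group
    have hgag : g * a * g⁻¹ = padicPow p a ((th g : ℤ_[p]ˣ) : ℤ_[p]) := hact g a ha
    have hsplit : padicPow p h (-((th g : ℤ_[p]ˣ) : ℤ_[p])) =
        padicPow p a (-((th g : ℤ_[p]ˣ) : ℤ_[p])) * padicPow p c (-((th g : ℤ_[p]ˣ) : ℤ_[p])) := by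
      rw [← hac]
      exact padicPow_mul_of_commute p hidx hca.symm _
    have k1 : a * padicPow p c (-((th g : ℤ_[p]ˣ) : ℤ_[p])) =
        padicPow p c (-((th g : ℤ_[p]ˣ) : ℤ_[p])) * a :=
      commute_padicPow p hidx hca.symm _
    have hcomm2 : padicPow p c (-((th g : ℤ_[p]ˣ) : ℤ_[p])) * padicPow p a ((th g : ℤ_[p]ˣ) : ℤ_[p]) =
        padicPow p a ((th g : ℤ_[p]ˣ) : ℤ_[p]) * padicPow p c (-((th g : ℤ_[p]ˣ) : ℤ_[p])) :=
      commute_padicPow p hidx k1.symm _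
    have hcancel : padicPow p a (-((th g : ℤ_[p]ˣ) : ℤ_[p])) * padicPow p a ((th g : ℤ_[p]ˣ) : ℤ_[p]) = 1 :=
      padicPow_neg_mul p hidx a _
    have hx : padicPow p h (-((th g : ℤ_[p]ˣ) : ℤ_[p])) * (g * h * g⁻¹) =
        padicPow p c (-((th d : ℤ_[p]ˣ) : ℤ_[p])) * (d * c * d⁻¹) := by
      have e1 : g * h * g⁻¹ = (g * a * g⁻¹) * (g * c * g⁻¹) := by rw [← hac]; group
      rw [hsplit, e1, hgag, hgcg]
      calc padicPow p a (-((th g : ℤ_[p]ˣ) : ℤ_[p])) * padicPow p c (-((th g : ℤ_[p]ˣ) : ℤ_[p])) *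
            (padicPow p a ((th g : ℤ_[p]ˣ) : ℤ_[p]) * (d * c * d⁻¹))
          = padicPow p a (-((th g : ℤ_[p]ˣ) : ℤ_[p])) *
            (padicPow p c (-((th g : ℤ_[p]ˣ) : ℤ_[p])) * padicPow p a ((th g : ℤ_[p]ˣ) : ℤ_[p])) *
            (d * c * d⁻¹) := by group
        _ = padicPow p a (-((th g : ℤ_[p]ˣ) : ℤ_[p])) *
            (padicPow p a ((th g : ℤ_[p]ˣ) : ℤ_[p]) * padicPow p c (-((th g : ℤ_[p]ˣ) : ℤ_[p]))) *
            (d * c * d⁻¹) := by rw [hcomm2]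
        _ = (padicPow p a (-((th g : ℤ_[p]ˣ) : ℤ_[p])) * padicPow p a ((th g : ℤ_[p]ˣ) : ℤ_[p])) *
            padicPow p c (-((th g : ℤ_[p]ˣ) : ℤ_[p])) * (d * c * d⁻¹) := by group
        _ = padicPow p c (-((th g : ℤ_[p]ˣ) : ℤ_[p])) * (d * c * d⁻¹) := by
            rw [hcancel, one_mul]
        _ = padicPow p c (-((th d : ℤ_[p]ˣ) : ℤ_[p])) * (d * c * d⁻¹) := by rw [hthg]
    rw [hx]
    have hthCc : (⟨c, hc⟩ : ↥C) ∈ thC.ker := by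
      rw [MonoidHom.mem_ker]
      show th c = 1
      exact hthc
    refine ⟨padicPow p (⟨c, hc⟩ : ↥C) (-((thC ⟨d, hd⟩ : ℤ_[p]ˣ) : ℤ_[p])) *
      (⟨d, hd⟩ * ⟨c, hc⟩ * (⟨d, hd⟩ : ↥C)⁻¹), ?_, ?_⟩
    · exact Subgroup.le_topologicalClosure _
        (Subgroup.subset_closure ⟨⟨d, hd⟩, ⟨c, hc⟩, hthCc, rfl⟩)
    · rw [map_mul]
      rw [show C.subtype (padicPow p (⟨c, hc⟩ : ↥C) (-((thC ⟨d, hd⟩ : ℤ_[p]ˣ) : ℤ_[p]))) =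
        padicPow p c (-((th d : ℤ_[p]ˣ) : ℤ_[p])) from padicPow_subtype p hidx hCclosed _ _]
      rfl
  -- closedness of the mapped subgroup
  have hmapclosed : IsClosed ((Subgroup.map C.subtype (Ktheta p thC) : Subgroup Ghat) : Set Ghat) := by
    have h1 : IsCompact ((Ktheta p thC : Subgroup ↥C) : Set ↥C) :=
      (Subgroup.isClosed_topologicalClosure _).isCompact
    have h2 : ((Subgroup.map C.subtype (Ktheta p thC)) : Set Ghat) =
        ⇑C.subtype '' ((Ktheta p thC : Subgroup ↥C) : Set ↥C) := Subgroup.coe_map _ _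
    rw [h2]
    exact (h1.image continuous_subtype_val).isClosed
  -- main equality
  have hmain : Ktheta p th = (Ktheta p thC).map C.subtype := by
    apply le_antisymm
    · rw [hKdef]
      apply Subgroup.topologicalClosure_minimal
      · rw [Subgroup.closure_le]
        exact fun x hx => hGtoC x hx
      · exact hmapclosed
    · rintro x ⟨y, hy, rfl⟩
      have h1 : (⇑C.subtype) y ∈ closure (⇑C.subtype '' ((Subgroup.closure SC : Subgroup ↥C) : Set ↥C)) := by
        apply image_closure_subset_closure_image continuous_subtype_val
        exact ⟨y, hy, rfl⟩
      have h2 : ⇑C.subtype '' ((Subgroup.closure SC : Subgroup ↥C) : Set ↥C) ⊆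
          ((Subgroup.closure S : Subgroup Ghat) : Set Ghat) := by
        rw [← Subgroup.coe_map, MonoidHom.map_closure]
        exact SetLike.coe_subset_coe.mpr (Subgroup.closure_mono
          (fun z hz => by obtain ⟨w, hw, rfl⟩ := hz; exact hCtoG w hw))
      exact closure_mono h2 h1
  have hppowne : ∀ k : ℕ, (p ^ k : ℕ) ≠ 0 := fun k =>
    pow_ne_zero k (Fact.out : p.Prime).ne_zero
  -- Kummerian equivalence
  have hkum : IsKummerian p th ↔ IsKummerian p thC := by
    constructor
    · intro hK x hxker k hpk
      have h1 : (x : Ghat) ^ (p ^ k) ∈ Ktheta p th := by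
        rw [hmain]
        exact ⟨x ^ (p ^ k), hpk, by push_cast; rfl⟩
      have hxk : (x : Ghat) ∈ th.ker := hxker
      have h2 : (x : Ghat) ∈ Ktheta p th := hK _ hxk k h1
      rw [hmain] at h2
      obtain ⟨y, hy, hy2⟩ := h2
      have : y = x := Subtype.ext hy2
      exact this ▸ hy
    · intro hK h hker k hpk
      obtain ⟨a, ha, c, hc, hac⟩ := hdecomp h
      have hthh : th h = 1 := hker
      have hthc : th c = 1 := by
        rw [← hac, map_mul, hth_one a ha, one_mul] at hthh; exact hthh
      have hca : c * a = a * c := hker_comm c hthc a ha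
      have hpow : h ^ (p ^ k) = a ^ (p ^ k) * c ^ (p ^ k) := by
        rw [← hac]
        exact Commute.mul_pow hca.symm _
      have hmem : h ^ (p ^ k) ∈ C := by
        rw [hmain] at hpk
        obtain ⟨y, _, hy2⟩ := hpk
        rw [← hy2]
        exact (y : ↥C).2
      have hamem : a ^ (p ^ k) ∈ C := by
        have heq : a ^ (p ^ k) = h ^ (p ^ k) * (c ^ (p ^ k))⁻¹ := by rw [hpow]; group
        rw [heq]
        exact C.mul_mem hmem (C.inv_mem (C.pow_mem hc _))
      have ha1 : a = 1 := by
        refine hAtf a ha (p ^ k) (hppowne k) ?_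
        have hbot : a ^ (p ^ k) ∈ A ⊓ C := ⟨A.pow_mem ha _, hamem⟩
        rw [hinf] at hbot
        exact hbot
      have hhc : h = c := by rw [← hac, ha1, one_mul]
      have hcker : (⟨c, hc⟩ : ↥C) ∈ thC.ker := by
        rw [MonoidHom.mem_ker]; show th c = 1; exact hthc
      have hcpk : (⟨c, hc⟩ : ↥C) ^ (p ^ k) ∈ Ktheta p thC := by
        rw [hmain] at hpk
        obtain ⟨y, hy, hy2⟩ := hpk
        have : y = (⟨c, hc⟩ : ↥C) ^ (p ^ k) := by
          apply Subtype.ext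
          push_cast
          rw [← hhc]
          exact hy2
        exact this ▸ hy
      have hfin := hK ⟨c, hc⟩ hcker k hcpk
      rw [hmain, hhc]
      exact ⟨⟨c, hc⟩, hfin, rfl⟩
  -- freeness equivalence
  have hfreeiff : IsFreeProP p ↥(Ktheta p th) ↔ IsFreeProP p ↥(Ktheta p thC) := by
    rw [hmain]
    set K := Ktheta p thC with hK_def
    have hinj : Function.Injective ⇑C.subtype := Subtype.coe_injective
    set e : ↥K ≃* ↥(K.map C.subtype) := Subgroup.equivMapOfInjective K C.subtype hinj with he_def
    have hecont : Continuous ⇑e := by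
      rw [Topology.IsEmbedding.subtypeVal.continuous_iff]
      have heq : (Subtype.val ∘ ⇑e) = fun x : ↥K => ((x : ↥C) : Ghat) := by
        funext x
        exact Subgroup.coe_equivMapOfInjective_apply K C.subtype hinj x
      rw [heq]
      exact continuous_subtype_val.comp continuous_subtype_val
    have hesymm : Continuous ⇑e.symm := by
      rw [Topology.IsEmbedding.subtypeVal.continuous_iff,
        Topology.IsEmbedding.subtypeVal.continuous_iff]
      have heq : (Subtype.val ∘ (Subtype.val ∘ ⇑e.symm)) =
          fun y : ↥(K.map C.subtype) => (y : Ghat) := by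
        funext y
        have h1 : ((e (e.symm y) : ↥(K.map C.subtype)) : Ghat) = C.subtype ↑(e.symm y) :=
          Subgroup.coe_equivMapOfInjective_apply K C.subtype hinj (e.symm y)
        rw [e.apply_symm_apply] at h1
        exact h1.symm
      rw [heq]
      exact continuous_subtype_val
    constructor
    · intro hf
      exact isFreeProP_of_mulEquiv p e.symm hesymm (by simpa using hecont) hf
    · intro hf
      exact isFreeProP_of_mulEquiv p e hecont hesymm hf
  refine ⟨hmain, hkum, ?_⟩
  exact ⟨fun ⟨h1, h2⟩ => ⟨hkum.mp h1, hfreeiff.mp h2⟩,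
    fun ⟨h1, h2⟩ => ⟨hkum.mpr h1, hfreeiff.mpr h2⟩⟩
end
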